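/- arXiv:1307.0810 — 10 statements merged into one kernel-verified Lean document; each statement's English description precedes it below -/
import Mathlib

section
/- For any positive semidefinite operator E on a d-dimensional complex Hilbert space with 0 ≤ E ≤ I, any unit vector ψ, any orthonormal basis {b_1,...,b_d}, and any 0 < p < 1, the reliability R_{ψ,p}(E) = p⟨ψ|diag E|ψ⟩ + (1−p)⟨ψ|(I−E)|ψ⟩ is strictly less than 1, where diag E = ∑_k |b_k⟩⟨b_k|E|b_k⟩⟨b_k|. -/
open Matrix
open scoped ComplexOrder

/-- imperfect reliability for detecting collapse, known ψ. -/
theorem stmt_0 (d : ℕ) (hd : 2 ≤ d)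
    (b : Fin d → (Fin d → ℂ))
    (hb : ∀ i j, star (b i) ⬝ᵥ b j = if i = j then 1 else 0)
    (ψ : Fin d → ℂ) (hψ : star ψ ⬝ᵥ ψ = 1)
    (p : ℝ) (hp0 : 0 < p) (hp1 : p < 1)
    (E : Matrix (Fin d) (Fin d) ℂ)
    (hE : E.PosSemidef) (hE' : (1 - E).PosSemidef) :
    ((p : ℂ) * (star ψ ⬝ᵥ ((∑ k, (star (b k) ⬝ᵥ (E *ᵥ b k)) • vecMulVec (b k) (star (b k))) *ᵥ ψ))
      + ((1 : ℂ) - p) * (star ψ ⬝ᵥ ((1 - E) *ᵥ ψ))).re < 1 := by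
  classical
  -- notation
  set a : Fin d → ℂ := fun k => star (b k) ⬝ᵥ ψ with ha
  set e : Fin d → ℂ := fun k => star (b k) ⬝ᵥ (E *ᵥ b k) with he
  -- e k is real in [0,1]
  have he0 : ∀ k, 0 ≤ (e k).re ∧ (e k).im = 0 := by
    intro k
    have := hE.dotProduct_mulVec_nonneg (b k)
    rw [Complex.nonneg_iff] at this
    exact ⟨this.1, this.2.symm⟩
  have he1 : ∀ k, (e k).re ≤ 1 := by
    intro k
    have h := hE'.dotProduct_mulVec_nonneg (b k)
    have : star (b k) ⬝ᵥ ((1 - E) *ᵥ b k) = 1 - e k := by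
      rw [sub_mulVec, dotProduct_sub, one_mulVec, hb k k]
      simp
      rfl
    rw [this, Complex.nonneg_iff] at h
    have := h.1
    simp at this
    linarith
  -- dot with each rank-one projector
  have hP : ∀ k, vecMulVec (b k) (star (b k)) *ᵥ ψ = a k • b k := by
    intro k
    ext i
    simp only [mulVec, vecMulVec_apply, dotProduct, Pi.smul_apply, smul_eq_mul, ha]
    rw [Finset.sum_mul]
    exact Finset.sum_congr rfl fun j _ => by ring
  have hdotb : ∀ k, star ψ ⬝ᵥ b k = star (a k) := by
    intro k
    exact star_dotProduct (v := ψ) (w := b k)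
  have hc : ∀ k, star ψ ⬝ᵥ (vecMulVec (b k) (star (b k)) *ᵥ ψ) = (Complex.normSq (a k) : ℝ) := by
    intro k
    rw [hP k, dotProduct_smul, hdotb k]
    simp [mul_comm, Complex.mul_conj]
  have hsumv : ∀ (P : Fin d → Matrix (Fin d) (Fin d) ℂ),
      star ψ ⬝ᵥ ((∑ k, P k) *ᵥ ψ) = ∑ k, star ψ ⬝ᵥ (P k *ᵥ ψ) := by
    intro P
    have h : (∑ k, P k) *ᵥ ψ = ∑ k, P k *ᵥ ψ := by
      ext i
      simp only [mulVec, dotProduct, Matrix.sum_apply, Finset.sum_mul, Finset.sum_apply]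
      rw [Finset.sum_comm]
    rw [h]
    simp only [dotProduct, Finset.sum_apply, Finset.mul_sum]
    rw [Finset.sum_comm]
  -- completeness
  set M : Matrix (Fin d) (Fin d) ℂ := Matrix.of (fun i j => b j i) with hM
  have h1 : Mᴴ * M = 1 := by
    ext i j
    simp only [Matrix.mul_apply, Matrix.conjTranspose_apply, hM, Matrix.of_apply,
      Matrix.one_apply]
    simpa [dotProduct] using hb i j
  have hcomp : (∑ k, vecMulVec (b k) (star (b k))) = (1 : Matrix (Fin d) (Fin d) ℂ) := by
    rw [← mul_eq_one_comm.mp h1]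
    ext i j
    simp [Matrix.mul_apply, vecMulVec_apply, hM, Matrix.sum_apply, mul_comm]
  have hsum1 : ∑ k, Complex.normSq (a k) = 1 := by
    have : ((∑ k, Complex.normSq (a k) : ℝ) : ℂ) = 1 := by
      push_cast
      calc (∑ k, (Complex.normSq (a k) : ℂ))
          = ∑ k, star ψ ⬝ᵥ (vecMulVec (b k) (star (b k)) *ᵥ ψ) := by
            exact Finset.sum_congr rfl fun k _ => (hc k).symm
        _ = star ψ ⬝ᵥ ((∑ k, vecMulVec (b k) (star (b k))) *ᵥ ψ) := (hsumv _).symm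
        _ = 1 := by rw [hcomp, one_mulVec, hψ]
    exact_mod_cast this
  -- first dot product
  have hfirst : star ψ ⬝ᵥ ((∑ k, e k • vecMulVec (b k) (star (b k))) *ᵥ ψ)
      = ∑ k, e k * (Complex.normSq (a k) : ℝ) := by
    rw [hsumv]
    refine Finset.sum_congr rfl fun k _ => ?_
    rw [smul_mulVec, dotProduct_smul, smul_eq_mul, hc k]
  -- second dot product
  set B : ℂ := star ψ ⬝ᵥ (E *ᵥ ψ) with hB
  have hsecond : star ψ ⬝ᵥ ((1 - E) *ᵥ ψ) = 1 - B := by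
    rw [sub_mulVec, dotProduct_sub, one_mulVec, hψ]
  have hB0 : 0 ≤ B.re ∧ B.im = 0 := by
    have := hE.dotProduct_mulVec_nonneg ψ
    rw [Complex.nonneg_iff] at this
    exact ⟨this.1, this.2.symm⟩
  -- real form
  have hre : ((p : ℂ) * (star ψ ⬝ᵥ ((∑ k, e k • vecMulVec (b k) (star (b k))) *ᵥ ψ))
      + ((1 : ℂ) - p) * (star ψ ⬝ᵥ ((1 - E) *ᵥ ψ))).re
      = p * (∑ k, (e k).re * Complex.normSq (a k)) + (1 - p) * (1 - B.re) := by
    rw [hfirst, hsecond]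
    simp [Complex.add_re, Complex.mul_re, Complex.sub_re, Complex.sub_im, hB0.2,
      Complex.re_sum, Complex.im_sum, (he0 _).2, Finset.sum_congr]
  rw [hre]
  -- the real inequality
  set A : ℝ := ∑ k, (e k).re * Complex.normSq (a k) with hA
  have hAle : A ≤ 1 := by
    rw [hA, ← hsum1]
    exact Finset.sum_le_sum fun k _ => by
      nlinarith [Complex.normSq_nonneg (a k), (he0 k).1, he1 k]
  by_cases hBpos : 0 < B.re
  · nlinarith
  · have hBz : B.re = 0 := le_antisymm (not_lt.mp hBpos) hB0.1
    have hBz' : B = 0 := Complex.ext hBz hB0.2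
    have hEψ : E *ᵥ ψ = 0 := (hE.dotProduct_mulVec_zero_iff ψ).mp hBz'
    -- show A < 1
    have hAlt : A < 1 := by
      rcases lt_or_eq_of_le hAle with h | h
      · exact h
      exfalso
      -- each term of ∑ c k (1 - r k) is zero
      have hterm : ∀ k, Complex.normSq (a k) * (1 - (e k).re) = 0 := by
        have hsz : ∑ k, Complex.normSq (a k) * (1 - (e k).re) = 0 := by
          have : ∑ k, Complex.normSq (a k) * (1 - (e k).re)
              = (∑ k, Complex.normSq (a k)) - A := by
            rw [hA, ← Finset.sum_sub_distrib]
            exact Finset.sum_congr rfl fun k _ => by ring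
          rw [this, hsum1, h, sub_self]
        intro k
        have := Finset.sum_eq_zero_iff_of_nonneg (fun k _ => by
          nlinarith [Complex.normSq_nonneg (a k), he1 k]) |>.mp hsz k (Finset.mem_univ k)
        exact this
      -- find k with a k ≠ 0
      have : ∃ k, Complex.normSq (a k) ≠ 0 := by
        by_contra hcon
        push_neg at hcon
        have : (1 : ℝ) = 0 := by rw [← hsum1]; exact Finset.sum_eq_zero fun k _ => hcon k
        norm_num at this
      obtain ⟨k, hk⟩ := this
      have hek : (e k).re = 1 := by
        have := hterm k
        rcases mul_eq_zero.mp this with h' | h'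
        · exact absurd h' hk
        · linarith
      have hek' : e k = 1 := Complex.ext (by simpa using hek) (by simpa using (he0 k).2)
      have h1E : (1 - E) *ᵥ b k = 0 := by
        apply (hE'.dotProduct_mulVec_zero_iff (b k)).mp
        have hrfl : star (b k) ⬝ᵥ (E *ᵥ b k) = e k := rfl
        rw [sub_mulVec, dotProduct_sub, one_mulVec, hb k k, hrfl, hek']
        simp
      have hEb : E *ᵥ b k = b k := by
        have := h1E
        rw [sub_mulVec, one_mulVec, sub_eq_zero] at this
        exact this.symm
      -- then a k = 0, contradiction
      have : a k = 0 := by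
        have h3 : star (b k) = star (b k) ᵥ* E := by
          have := congrArg star hEb
          rw [star_mulVec, hE.isHermitian.eq] at this
          exact this.symm
        calc a k = star (b k) ⬝ᵥ ψ := rfl
          _ = (star (b k) ᵥ* E) ⬝ᵥ ψ := by rw [← h3]
          _ = star (b k) ⬝ᵥ (E *ᵥ ψ) := (dotProduct_mulVec _ _ _).symm
          _ = 0 := by rw [hEψ, dotProduct_zero]
      exact hk (by rw [this]; simp)
    nlinarith
end

section
/- (Helstrom's theorem, value) For density matrices ρ₁, ρ₂ on a finite-dimensional Hilbert space and 0 ≤ p ≤ 1, the maximum over all operators 0 ≤ E ≤ I of R(E) = p·tr(ρ₁E) + (1−p)·tr(ρ₂(I−E)) equals (1−p) + λ⁺, where λ⁺ is the sum of the positive eigenvalues (with multiplicity) of A = pρ₁ − (1−p)ρ₂. -/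
open Matrix
open scoped ComplexOrder

lemma trace_diagonal_mul' {n : ℕ} (v : Fin n → ℂ) (M : Matrix (Fin n) (Fin n) ℂ) :
    (Matrix.diagonal v * M).trace = ∑ i, v i * M i i := by
  simp [Matrix.trace, Matrix.diag, Matrix.diagonal_mul]

lemma psd_diag_mem {n : ℕ} {M : Matrix (Fin n) (Fin n) ℂ} (hM : M.PosSemidef) (i : Fin n) :
    0 ≤ (M i i).re ∧ (M i i).im = 0 := by
  have h := hM.dotProduct_mulVec_nonneg (Pi.single i 1)
  have h2 : star (Pi.single i 1 : Fin n → ℂ) ⬝ᵥ (M *ᵥ Pi.single i 1) = M i i := by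
    simp [Matrix.mulVec_single, dotProduct, Pi.single_apply, apply_ite]
  rw [h2] at h
  rw [Complex.le_def] at h
  exact ⟨by simpa using h.1, by simpa using h.2.symm⟩

/-- Helstrom's theorem, value of the maximal reliability. -/
theorem stmt_1 (d : ℕ) (ρ₁ ρ₂ : Matrix (Fin d) (Fin d) ℂ)
    (hρ₁ : ρ₁.PosSemidef) (hρ₂ : ρ₂.PosSemidef)
    (hρ₁t : ρ₁.trace = 1) (hρ₂t : ρ₂.trace = 1)
    (p : ℝ) (hp0 : 0 ≤ p) (hp1 : p ≤ 1)
    (hA : ((p : ℂ) • ρ₁ - ((1 : ℂ) - (p : ℂ)) • ρ₂).IsHermitian) :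
    IsGreatest
      {r : ℝ | ∃ E : Matrix (Fin d) (Fin d) ℂ, E.PosSemidef ∧ (1 - E).PosSemidef ∧
        r = ((p : ℂ) * (ρ₁ * E).trace + ((1 : ℂ) - (p : ℂ)) * (ρ₂ * (1 - E)).trace).re}
      ((1 - p) + ∑ i ∈ Finset.univ.filter (fun i => 0 < hA.eigenvalues i), hA.eigenvalues i) := by
  set A : Matrix (Fin d) (Fin d) ℂ := (p : ℂ) • ρ₁ - ((1 : ℂ) - (p : ℂ)) • ρ₂ with hAdef
  set U : Matrix (Fin d) (Fin d) ℂ := (hA.eigenvectorUnitary : Matrix (Fin d) (Fin d) ℂ) with hUdef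
  have hU1 : star U * U = 1 := Unitary.coe_star_mul_self hA.eigenvectorUnitary
  have hU2 : U * star U = 1 := Unitary.coe_mul_star_self hA.eigenvectorUnitary
  set lam := hA.eigenvalues with hlam
  have hspec : A = U * Matrix.diagonal (RCLike.ofReal ∘ lam) * star U := hA.spectral_theorem
  -- key reduction: value in terms of tr(A * E)
  have key : ∀ E : Matrix (Fin d) (Fin d) ℂ,
      ((p : ℂ) * (ρ₁ * E).trace + ((1 : ℂ) - (p : ℂ)) * (ρ₂ * (1 - E)).trace)
        = ((1 : ℂ) - (p : ℂ)) + (A * E).trace := by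
    intro E
    have : (A * E).trace = (p : ℂ) * (ρ₁ * E).trace - ((1:ℂ) - p) * (ρ₂ * E).trace := by
      simp [hAdef, Matrix.sub_mul, Matrix.smul_mul, Matrix.trace_sub, Matrix.trace_smul,
        smul_eq_mul]
    rw [this]
    have h2 : (ρ₂ * (1 - E)).trace = 1 - (ρ₂ * E).trace := by
      simp [Matrix.mul_sub, Matrix.trace_sub, hρ₂t]
    rw [h2]; ring
  have keyre : ∀ E : Matrix (Fin d) (Fin d) ℂ,
      ((p : ℂ) * (ρ₁ * E).trace + ((1 : ℂ) - (p : ℂ)) * (ρ₂ * (1 - E)).trace).re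
        = (1 - p) + ((A * E).trace).re := by
    intro E
    rw [key E]
    simp [Complex.add_re, Complex.sub_re]
  constructor
  · -- membership: E₀ projector onto positive eigenspace
    set v : Fin d → ℂ := fun i => if 0 < lam i then 1 else 0 with hv
    refine ⟨U * Matrix.diagonal v * star U, ?_, ?_, ?_⟩
    · rw [show star U = Uᴴ from rfl]
      exact (Matrix.posSemidef_diagonal_iff.mpr (fun i => by
        simp only [hv]; split <;> simp)).mul_mul_conjTranspose_same U
    · have h1 : (1 : Matrix (Fin d) (Fin d) ℂ) - U * Matrix.diagonal v * star U
          = U * Matrix.diagonal (fun i => 1 - v i) * star U := by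
        have : (Matrix.diagonal (fun i => 1 - v i) : Matrix (Fin d) (Fin d) ℂ)
            = 1 - Matrix.diagonal v := by
          rw [← Matrix.diagonal_one, ← Matrix.diagonal_sub]
        rw [this, Matrix.mul_sub, Matrix.mul_one, Matrix.sub_mul, hU2]
      rw [h1, show star U = Uᴴ from rfl]
      exact (Matrix.posSemidef_diagonal_iff.mpr (fun i => by
        simp only [hv]; split <;> simp)).mul_mul_conjTranspose_same U
    · rw [keyre]
      have hAE : A * (U * Matrix.diagonal v * star U)
          = U * (Matrix.diagonal (RCLike.ofReal ∘ lam) * Matrix.diagonal v) * star U := by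
        rw [hspec]
        calc U * Matrix.diagonal (RCLike.ofReal ∘ lam) * star U * (U * Matrix.diagonal v * star U)
            = U * Matrix.diagonal (RCLike.ofReal ∘ lam) * (star U * U) * Matrix.diagonal v * star U := by
              simp only [Matrix.mul_assoc]
          _ = U * (Matrix.diagonal (RCLike.ofReal ∘ lam) * Matrix.diagonal v) * star U := by
              rw [hU1]; simp only [Matrix.mul_assoc, Matrix.one_mul]
      rw [hAE]
      have htr : (U * (Matrix.diagonal (RCLike.ofReal ∘ lam) * Matrix.diagonal v) * star U).trace
          = (Matrix.diagonal (RCLike.ofReal ∘ lam) * Matrix.diagonal v).trace := by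
        rw [Matrix.trace_mul_cycle, ← Matrix.mul_assoc, hU1, Matrix.one_mul]
      rw [htr, Matrix.diagonal_mul_diagonal, Matrix.trace_diagonal]
      have : (∑ i, (RCLike.ofReal ∘ lam) i * v i).re = ∑ i, if 0 < lam i then lam i else 0 := by
        rw [Complex.re_sum]
        congr 1; funext i
        simp only [hv, Function.comp_apply, RCLike.ofReal_alg]
        split <;> simp
      rw [this, Finset.sum_ite, Finset.sum_const_zero, add_zero]
  · -- upper bound
    rintro r ⟨E, hE, hE1, rfl⟩
    rw [keyre]
    have hF : (star U * E * U).PosSemidef := by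
      rw [show star U = Uᴴ from rfl]; exact hE.conjTranspose_mul_mul_same U
    set F := star U * E * U with hFdef
    have hF1 : ((1 : Matrix (Fin d) (Fin d) ℂ) - F).PosSemidef := by
      have : (1 : Matrix (Fin d) (Fin d) ℂ) - F = star U * (1 - E) * U := by
        rw [Matrix.mul_sub, Matrix.mul_one, Matrix.sub_mul, hU1, hFdef]
      rw [this, show star U = Uᴴ from rfl]
      exact hE1.conjTranspose_mul_mul_same U
    have htr : (A * E).trace = (Matrix.diagonal (RCLike.ofReal ∘ lam) * F).trace := by
      have : A * E = U * (Matrix.diagonal (RCLike.ofReal ∘ lam) * F) * star U := by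
        rw [hFdef, hspec]
        calc U * Matrix.diagonal (RCLike.ofReal ∘ lam) * star U * E
            = U * (Matrix.diagonal (RCLike.ofReal ∘ lam) * (star U * E * U)) * star U := by
              simp only [Matrix.mul_assoc, hU2, Matrix.mul_one]
          _ = _ := rfl
      rw [this, Matrix.trace_mul_cycle, ← Matrix.mul_assoc, hU1, Matrix.one_mul]
    rw [htr, trace_diagonal_mul']
    have hre : (∑ i, (RCLike.ofReal ∘ lam) i * F i i).re = ∑ i, lam i * (F i i).re := by
      rw [Complex.re_sum]
      congr 1; funext i
      simp [Complex.re_ofReal_mul]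
    rw [hre]
    have hbound : ∑ i, lam i * (F i i).re
        ≤ ∑ i ∈ Finset.univ.filter (fun i => 0 < lam i), lam i := by
      rw [← Finset.sum_filter_add_sum_filter_not Finset.univ (fun i => 0 < lam i)]
      have h1 : ∑ i ∈ Finset.univ.filter (fun i => 0 < lam i), lam i * (F i i).re
          ≤ ∑ i ∈ Finset.univ.filter (fun i => 0 < lam i), lam i := by
        apply Finset.sum_le_sum
        intro i hi
        have hpos := (Finset.mem_filter.mp hi).2
        have hle1 : (F i i).re ≤ 1 := by
          have := (psd_diag_mem hF1 i).1
          have hone : ((1 : Matrix (Fin d) (Fin d) ℂ) - F) i i = 1 - F i i := by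
            simp [Matrix.sub_apply, Matrix.one_apply]
          rw [hone] at this
          simpa [Complex.sub_re] using this
        exact mul_le_of_le_one_right hpos.le hle1
      have h2 : ∑ i ∈ Finset.univ.filter (fun i => ¬ 0 < lam i), lam i * (F i i).re ≤ 0 := by
        apply Finset.sum_nonpos
        intro i hi
        have hnp := (Finset.mem_filter.mp hi).2
        exact mul_nonpos_of_nonpos_of_nonneg (not_lt.mp hnp) (psd_diag_mem hF i).1
      linarith
    linarith
end

section
/- (Helstrom's theorem, optimizers) For A = pρ₁ − (1−p)ρ₂ with ρ₁, ρ₂ density matrices, an operator 0 ≤ E ≤ I maximizes p·tr(ρ₁E) + (1−p)·tr(ρ₂(I−E)) if and only if P⁺ ≤ E ≤ P⁺ + P⁰, where P⁺ is the spectral projection of A onto its positive eigenspaces and P⁰ the projection onto ker A. -/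
open Matrix
open scoped ComplexOrder

lemma diag_nonneg {n : Type*} [Fintype n] [DecidableEq n] {M : Matrix n n ℂ}
    (hM : M.PosSemidef) (i : n) : 0 ≤ M i i := by
  have := hM.dotProduct_mulVec_nonneg (Pi.single i 1)
  simpa [dotProduct, Pi.single_apply, apply_ite, mulVec, Finset.sum_ite_eq] using this

lemma row_zero {n : Type*} [Fintype n] [DecidableEq n] {M : Matrix n n ℂ}
    (hM : M.PosSemidef) (i : n) (h : M i i = 0) (j : n) : M i j = 0 := by
  have hB : ∃ B : Matrix n n ℂ, M = Bᴴ * B := by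
    open scoped MatrixOrder in exact CStarAlgebra.nonneg_iff_eq_star_mul_self.mp hM.nonneg
  obtain ⟨B, rfl⟩ := hB
  have hcol : ∀ k, B k i = 0 := by
    intro k
    have h' : ∑ k, Complex.normSq (B k i) = 0 := by
      have h2 := congrArg Complex.re h
      simp only [Matrix.mul_apply, Matrix.conjTranspose_apply, Complex.zero_re] at h2
      rw [Complex.re_sum] at h2
      rw [← h2]
      apply Finset.sum_congr rfl
      intro k _
      simp [Complex.normSq, Complex.mul_re]
    have := (Finset.sum_eq_zero_iff_of_nonneg (fun k _ => Complex.normSq_nonneg _)).mp h' k (Finset.mem_univ k)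
    exact Complex.normSq_eq_zero.mp this
  simp [Matrix.mul_apply, Matrix.conjTranspose_apply, hcol]

lemma key {n : Type*} [Fintype n] [DecidableEq n] (lam : n → ℝ) (g : Matrix n n ℂ)
    (hg : g.PosSemidef) (hg' : (1 - g).PosSemidef) :
    ((∀ i, 0 < lam i → g i i = 1) ∧ (∀ i, lam i < 0 → g i i = 0)) ↔
      ((g - diagonal (fun i => if 0 < lam i then (1:ℂ) else 0)).PosSemidef ∧
       (diagonal (fun i => if 0 < lam i then (1:ℂ) else 0) +
        diagonal (fun i => if lam i = 0 then (1:ℂ) else 0) - g).PosSemidef) := by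
  constructor
  · rintro ⟨h1, h2⟩
    have hrow1 : ∀ i, 0 < lam i → ∀ j, g i j = if i = j then 1 else 0 := by
      intro i hi j
      have : (1 - g) i j = 0 := by
        apply row_zero hg' i _ j
        simp [Matrix.sub_apply, h1 i hi]
      have h1g : (1 : Matrix n n ℂ) i j - g i j = 0 := by simpa [Matrix.sub_apply] using this
      rw [← sub_eq_zero.mp h1g, Matrix.one_apply]
    have hrow2 : ∀ i, lam i < 0 → ∀ j, g i j = 0 := fun i hi j => row_zero hg i (h2 i hi) j
    have hcol1 : ∀ j, 0 < lam j → ∀ i, g i j = if i = j then 1 else 0 := by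
      intro j hj i
      rw [← hg.isHermitian.apply i j, hrow1 j hj i]
      by_cases h : i = j
      · simp [h]
      · rw [if_neg h, if_neg (fun hh => h hh.symm), star_zero]
    have hcol2 : ∀ j, lam j < 0 → ∀ i, g i j = 0 := by
      intro j hj i
      rw [← hg.isHermitian.apply i j, hrow2 j hj i, star_zero]
    constructor
    · -- g - Dp = Q * g * Q with Q = diagonal (if 0 < lam then 0 else 1)
      have hQ : g - diagonal (fun i => if 0 < lam i then (1:ℂ) else 0) =
          (diagonal (fun i => if 0 < lam i then (0:ℂ) else 1))ᴴ * g *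
          (diagonal (fun i => if 0 < lam i then (0:ℂ) else 1)) := by
        rw [Matrix.diagonal_conjTranspose]
        have hq : (star fun i => if 0 < lam i then (0:ℂ) else 1) = fun i => if 0 < lam i then (0:ℂ) else 1 := by
          funext i; by_cases h : 0 < lam i <;> simp [h]
        rw [hq]
        ext i j
        rw [Matrix.mul_diagonal, Matrix.diagonal_mul]
        simp only [Matrix.sub_apply, Matrix.diagonal_apply]
        by_cases hi : 0 < lam i
        · rw [hrow1 i hi j]
          by_cases h : i = j
          · subst h; simp [hi]
          · simp [h, hi]
        · by_cases hj : 0 < lam j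
          · rw [hcol1 j hj i]
            have hne : i ≠ j := fun h => hi (h ▸ hj)
            simp [hne, hi, hj]
          · by_cases h : i = j
            · subst h; simp [hi]
            · simp [h, hi, hj]
      rw [hQ]
      exact hg.conjTranspose_mul_mul_same _
    · have hR : diagonal (fun i => if 0 < lam i then (1:ℂ) else 0) +
          diagonal (fun i => if lam i = 0 then (1:ℂ) else 0) - g =
          (diagonal (fun i => if lam i < 0 then (0:ℂ) else 1))ᴴ * (1 - g) *
          (diagonal (fun i => if lam i < 0 then (0:ℂ) else 1)) := by
        rw [Matrix.diagonal_conjTranspose]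
        have hq : (star fun i => if lam i < 0 then (0:ℂ) else 1) = fun i => if lam i < 0 then (0:ℂ) else 1 := by
          funext i; by_cases h : lam i < 0 <;> simp [h]
        rw [hq]
        ext i j
        rw [Matrix.mul_diagonal, Matrix.diagonal_mul]
        simp only [Matrix.sub_apply, Matrix.add_apply, Matrix.one_apply, Matrix.diagonal_apply]
        by_cases hi : lam i < 0
        · rw [hrow2 i hi j]
          have hi' : ¬ 0 < lam i := by linarith
          have hi'' : lam i ≠ 0 := by linarith
          by_cases h : i = j
          · subst h; simp [hi, hi', hi'']
          · simp [h, hi]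
        · by_cases hj : lam j < 0
          · rw [hcol2 j hj i]
            have hne : i ≠ j := fun h => hi (h ▸ hj)
            simp [hne, hi, hj]
          · by_cases h : i = j
            · subst h
              rcases lt_trichotomy (lam i) 0 with hlt | heq | hgt
              · exact absurd hlt hi
              · simp [heq, hi]
              · simp [hgt, hgt.ne', hi]
            · simp [h, hi, hj]
      rw [hR]
      exact hg'.conjTranspose_mul_mul_same _
  · rintro ⟨h1, h2⟩
    constructor
    · intro i hi
      have d1 := diag_nonneg h1 i
      have d2 := diag_nonneg hg' i
      simp only [Matrix.sub_apply, Matrix.diagonal_apply_eq, hi, if_pos, Matrix.one_apply_eq] at d1 d2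
      rw [Complex.le_def] at d1 d2
      simp only [Complex.zero_re, Complex.zero_im, Complex.sub_re, Complex.sub_im,
        Complex.one_re, Complex.one_im] at d1 d2
      apply Complex.ext <;> simp [Complex.one_re, Complex.one_im] <;> [linarith [d1.1, d2.1]; linarith [d1.2]]
    · intro i hi
      have d1 := diag_nonneg h2 i
      have d2 := diag_nonneg hg i
      have hi' : ¬ 0 < lam i := by linarith
      have hi'' : lam i ≠ 0 := by linarith
      simp only [Matrix.sub_apply, Matrix.add_apply, Matrix.diagonal_apply_eq, hi', hi'',
        if_neg, if_false, zero_add, zero_sub] at d1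
      have hle : g i i ≤ 0 := by
        have h0 : 0 ≤ -(g i i) := by simpa using d1
        exact neg_nonneg.mp h0
      exact le_antisymm hle d2

lemma termb (l x : ℝ) (h0 : 0 ≤ x) (h1 : x ≤ 1) : l * x ≤ max l 0 := by
  rcases le_or_gt l 0 with h | h
  · exact le_trans (mul_nonpos_of_nonpos_of_nonneg h h0) (le_max_right _ _)
  · calc l * x ≤ l * 1 := by nlinarith
    _ = l := mul_one l
    _ ≤ max l 0 := le_max_left _ _


/-- Helstrom's theorem, characterization of the optimizers. -/
theorem stmt_2 (d : ℕ) (ρ₁ ρ₂ : Matrix (Fin d) (Fin d) ℂ)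
    (hρ₁ : ρ₁.PosSemidef) (hρ₂ : ρ₂.PosSemidef)
    (hρ₁t : ρ₁.trace = 1) (hρ₂t : ρ₂.trace = 1)
    (p : ℝ) (hp0 : 0 ≤ p) (hp1 : p ≤ 1)
    (hA : ((p : ℂ) • ρ₁ - ((1 : ℂ) - (p : ℂ)) • ρ₂).IsHermitian)
    (Pplus P0 : Matrix (Fin d) (Fin d) ℂ)
    (hPplus : Pplus = (hA.eigenvectorUnitary : Matrix (Fin d) (Fin d) ℂ) *
      Matrix.diagonal (fun i => if 0 < hA.eigenvalues i then (1 : ℂ) else 0) *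
      star (hA.eigenvectorUnitary : Matrix (Fin d) (Fin d) ℂ))
    (hP0 : P0 = (hA.eigenvectorUnitary : Matrix (Fin d) (Fin d) ℂ) *
      Matrix.diagonal (fun i => if hA.eigenvalues i = 0 then (1 : ℂ) else 0) *
      star (hA.eigenvectorUnitary : Matrix (Fin d) (Fin d) ℂ))
    (E : Matrix (Fin d) (Fin d) ℂ) (hE : E.PosSemidef) (hE' : (1 - E).PosSemidef) :
    (∀ F : Matrix (Fin d) (Fin d) ℂ, F.PosSemidef → (1 - F).PosSemidef →
        ((p : ℂ) * (ρ₁ * F).trace + ((1 : ℂ) - (p : ℂ)) * (ρ₂ * (1 - F)).trace).re ≤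
        ((p : ℂ) * (ρ₁ * E).trace + ((1 : ℂ) - (p : ℂ)) * (ρ₂ * (1 - E)).trace).re)
      ↔ ((E - Pplus).PosSemidef ∧ (Pplus + P0 - E).PosSemidef) := by
  set U : Matrix (Fin d) (Fin d) ℂ := (hA.eigenvectorUnitary : Matrix (Fin d) (Fin d) ℂ) with hUdef
  set lam : Fin d → ℝ := hA.eigenvalues with hlamdef
  set A : Matrix (Fin d) (Fin d) ℂ := (p : ℂ) • ρ₁ - ((1 : ℂ) - (p : ℂ)) • ρ₂ with hAdef
  have hUU : star U * U = 1 := hA.eigenvectorUnitary.2.1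
  have hUU' : U * star U = 1 := hA.eigenvectorUnitary.2.2
  have hspec : A = U * Matrix.diagonal (fun i => ((lam i : ℝ) : ℂ)) * star U := by
    have := hA.spectral_theorem
    rw [Unitary.conjStarAlgAut_apply] at this
    exact this
  -- sandwich identities
  have hsand : ∀ M : Matrix (Fin d) (Fin d) ℂ, U * (star U * M * U) * star U = M := by
    intro M
    calc U * (star U * M * U) * star U = (U * star U) * M * (U * star U) := by
          simp only [Matrix.mul_assoc]
      _ = M := by rw [hUU', Matrix.one_mul, Matrix.mul_one]
  have hsand2 : ∀ M : Matrix (Fin d) (Fin d) ℂ, star U * (U * M * star U) * U = M := by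
    intro M
    calc star U * (U * M * star U) * U = (star U * U) * M * (star U * U) := by
          simp only [Matrix.mul_assoc]
      _ = M := by rw [hUU, Matrix.one_mul, Matrix.mul_one]
  have hG1 : star U * (1 : Matrix (Fin d) (Fin d) ℂ) * U = 1 := by
    rw [Matrix.mul_one, hUU]
  -- trace formula
  have htr : ∀ F : Matrix (Fin d) (Fin d) ℂ,
      (A * F).trace = ∑ i, ((lam i : ℝ) : ℂ) * (star U * F * U) i i := by
    intro F
    rw [hspec]
    have h1 : U * Matrix.diagonal (fun i => ((lam i : ℝ) : ℂ)) * star U * F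
        = U * (Matrix.diagonal (fun i => ((lam i : ℝ) : ℂ)) * (star U * F)) := by
      simp only [Matrix.mul_assoc]
    rw [h1, Matrix.trace_mul_comm]
    have h2 : Matrix.diagonal (fun i => ((lam i : ℝ) : ℂ)) * (star U * F) * U
        = Matrix.diagonal (fun i => ((lam i : ℝ) : ℂ)) * (star U * F * U) := by
      simp only [Matrix.mul_assoc]
    rw [h2]
    simp [Matrix.trace, Matrix.diag, Matrix.diagonal_mul]
  have htre : ∀ F : Matrix (Fin d) (Fin d) ℂ,
      (A * F).trace.re = ∑ i, lam i * ((star U * F * U) i i).re := by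
    intro F
    rw [htr F, Complex.re_sum]
    exact Finset.sum_congr rfl fun i _ => Complex.re_ofReal_mul _ _
  -- value identity
  have hval : ∀ F : Matrix (Fin d) (Fin d) ℂ,
      ((p : ℂ) * (ρ₁ * F).trace + ((1 : ℂ) - (p : ℂ)) * (ρ₂ * (1 - F)).trace).re
        = (A * F).trace.re + (1 - p) := by
    intro F
    have h1 : A * F = (p : ℂ) • (ρ₁ * F) - ((1 : ℂ) - (p : ℂ)) • (ρ₂ * F) := by
      rw [hAdef, Matrix.sub_mul, Matrix.smul_mul, Matrix.smul_mul]
    have h2 : (ρ₂ * (1 - F)).trace = 1 - (ρ₂ * F).trace := by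
      rw [Matrix.mul_sub, Matrix.mul_one, Matrix.trace_sub, hρ₂t]
    have h3 : (p : ℂ) * (ρ₁ * F).trace + ((1 : ℂ) - (p : ℂ)) * (ρ₂ * (1 - F)).trace
        = (A * F).trace + ((1 : ℂ) - (p : ℂ)) := by
      rw [h1, h2, Matrix.trace_sub, Matrix.trace_smul, Matrix.trace_smul]
      simp only [smul_eq_mul]
      ring
    rw [h3, Complex.add_re, Complex.sub_re, Complex.one_re, Complex.ofReal_re]
  -- conjugated matrices are PSD
  have hconj : ∀ F : Matrix (Fin d) (Fin d) ℂ, F.PosSemidef → (star U * F * U).PosSemidef := by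
    intro F hF
    have := hF.conjTranspose_mul_mul_same U
    rwa [← Matrix.star_eq_conjTranspose] at this
  have hconj' : ∀ F : Matrix (Fin d) (Fin d) ℂ, F.PosSemidef → (U * F * star U).PosSemidef := by
    intro F hF
    have := hF.mul_mul_conjTranspose_same U
    rwa [← Matrix.star_eq_conjTranspose] at this
  -- diag bounds for admissible F
  have hdiag : ∀ F : Matrix (Fin d) (Fin d) ℂ, F.PosSemidef → (1 - F).PosSemidef →
      ∀ i, 0 ≤ ((star U * F * U) i i).re ∧ ((star U * F * U) i i).re ≤ 1 ∧
        ((star U * F * U) i i).im = 0 := by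
    intro F hF hF' i
    have d1 : 0 ≤ (star U * F * U) i i := by
      have := (hconj F hF).dotProduct_mulVec_nonneg (Pi.single i 1)
      simpa [dotProduct, Pi.single_apply, apply_ite, Matrix.mulVec,
        Finset.sum_ite_eq] using this
    have hG : star U * (1 - F) * U = 1 - star U * F * U := by
      rw [Matrix.mul_sub, Matrix.sub_mul, hG1]
    have d2 : 0 ≤ (1 - star U * F * U) i i := by
      have h := (hconj _ hF').dotProduct_mulVec_nonneg (Pi.single i 1)
      rw [hG] at h
      simpa [dotProduct, Pi.single_apply, apply_ite, Matrix.mulVec,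
        Finset.sum_ite_eq] using h
    rw [Complex.le_def] at d1 d2
    simp only [Matrix.sub_apply, Matrix.one_apply_eq, Complex.zero_re, Complex.zero_im,
      Complex.sub_re, Complex.sub_im, Complex.one_re, Complex.one_im] at d1 d2
    refine ⟨d1.1, by linarith [d2.1], d1.2.symm⟩
  -- Pplus in eigenbasis
  have hPp : star U * Pplus * U = Matrix.diagonal (fun i => if 0 < lam i then (1 : ℂ) else 0) := by
    rw [hPplus]; exact hsand2 _
  have hP0' : star U * P0 * U = Matrix.diagonal (fun i => if lam i = 0 then (1 : ℂ) else 0) := by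
    rw [hP0]; exact hsand2 _
  have hDpPSD : (Matrix.diagonal (fun i => if 0 < lam i then (1 : ℂ) else 0)).PosSemidef := by
    refine Matrix.posSemidef_diagonal_iff.mpr fun i => ?_
    by_cases h : 0 < lam i <;> simp [h]
  have hDpPSD' : ((1 : Matrix (Fin d) (Fin d) ℂ) -
      Matrix.diagonal (fun i => if 0 < lam i then (1 : ℂ) else 0)).PosSemidef := by
    rw [← Matrix.diagonal_one, Matrix.diagonal_sub]
    refine Matrix.posSemidef_diagonal_iff.mpr fun i => ?_
    by_cases h : 0 < lam i <;> simp [h]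
  have hPplusPSD : Pplus.PosSemidef := by
    rw [hPplus]; exact hconj' _ hDpPSD
  have hPplusPSD' : ((1 : Matrix (Fin d) (Fin d) ℂ) - Pplus).PosSemidef := by
    have : (1 : Matrix (Fin d) (Fin d) ℂ) - Pplus =
        U * ((1 : Matrix (Fin d) (Fin d) ℂ) -
          Matrix.diagonal (fun i => if 0 < lam i then (1 : ℂ) else 0)) * star U := by
      rw [hPplus, Matrix.mul_sub, Matrix.sub_mul, Matrix.mul_one, hUU']
    rw [this]; exact hconj' _ hDpPSD'
  -- value at Pplus
  have hPpval : (A * Pplus).trace.re = ∑ i, max (lam i) 0 := by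
    rw [htre Pplus]
    refine Finset.sum_congr rfl fun i _ => ?_
    rw [hPp, Matrix.diagonal_apply_eq]
    rcases le_or_gt (lam i) 0 with h | h
    · have : ¬ 0 < lam i := not_lt.mpr h
      simp [this, max_eq_right h]
    · simp [h, max_eq_left h.le]
  have hgE := hconj E hE
  have hgE' : ((1 : Matrix (Fin d) (Fin d) ℂ) - star U * E * U).PosSemidef := by
    have h := hconj _ hE'
    rwa [Matrix.mul_sub, Matrix.sub_mul, hG1] at h
  constructor
  · intro hopt
    have hge : ∑ i, max (lam i) 0 ≤ (A * E).trace.re := by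
      have h := hopt Pplus hPplusPSD hPplusPSD'
      rw [hval Pplus, hval E, hPpval] at h
      linarith
    have hterm : ∀ i, lam i * ((star U * E * U) i i).re = max (lam i) 0 := by
      by_contra hcon
      push_neg at hcon
      obtain ⟨i0, hi0⟩ := hcon
      have hlt : lam i0 * ((star U * E * U) i0 i0).re < max (lam i0) 0 :=
        lt_of_le_of_ne (termb _ _ (hdiag E hE hE' i0).1 (hdiag E hE hE' i0).2.1) hi0
      have hsum : (A * E).trace.re < ∑ i, max (lam i) 0 := by
        rw [htre E]
        exact Finset.sum_lt_sum
          (fun i _ => termb _ _ (hdiag E hE hE' i).1 (hdiag E hE hE' i).2.1)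
          ⟨i0, Finset.mem_univ i0, hlt⟩
      linarith
    have hd1 : ∀ i, 0 < lam i → (star U * E * U) i i = 1 := by
      intro i hi
      have h := hterm i
      rw [max_eq_left hi.le] at h
      have hre : ((star U * E * U) i i).re = 1 :=
        mul_left_cancel₀ hi.ne' (by rw [h, mul_one])
      exact Complex.ext (by simp [hre]) (by simp [(hdiag E hE hE' i).2.2])
    have hd2 : ∀ i, lam i < 0 → (star U * E * U) i i = 0 := by
      intro i hi
      have h := hterm i
      rw [max_eq_right hi.le] at h
      have hre : ((star U * E * U) i i).re = 0 := by
        rcases mul_eq_zero.mp h with h' | h'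
        · exact absurd h' hi.ne
        · exact h'
      exact Complex.ext (by simp [hre]) (by simp [(hdiag E hE hE' i).2.2])
    obtain ⟨k1, k2⟩ := (key lam _ hgE hgE').mp ⟨hd1, hd2⟩
    constructor
    · have hEP : E - Pplus = U * ((star U * E * U) -
          Matrix.diagonal (fun i => if 0 < lam i then (1 : ℂ) else 0)) * star U := by
        rw [Matrix.mul_sub, Matrix.sub_mul, hsand E, hPplus]
      rw [hEP]
      exact hconj' _ k1
    · have hEP2 : Pplus + P0 - E = U * ((Matrix.diagonal (fun i => if 0 < lam i then (1 : ℂ) else 0)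
          + Matrix.diagonal (fun i => if lam i = 0 then (1 : ℂ) else 0)) - star U * E * U) *
          star U := by
        rw [Matrix.mul_sub, Matrix.mul_add, Matrix.sub_mul, Matrix.add_mul, hsand E, hPplus, hP0]
      rw [hEP2]
      exact hconj' _ k2
  · rintro ⟨h1, h2⟩
    have k1 : ((star U * E * U) -
        Matrix.diagonal (fun i => if 0 < lam i then (1 : ℂ) else 0)).PosSemidef := by
      have h := hconj _ h1
      rwa [Matrix.mul_sub, Matrix.sub_mul, hPp] at h
    have k2 : ((Matrix.diagonal (fun i => if 0 < lam i then (1 : ℂ) else 0)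
        + Matrix.diagonal (fun i => if lam i = 0 then (1 : ℂ) else 0))
        - star U * E * U).PosSemidef := by
      have h := hconj _ h2
      rwa [Matrix.mul_sub, Matrix.mul_add, Matrix.sub_mul, Matrix.add_mul, hPp, hP0'] at h
    obtain ⟨hd1, hd2⟩ := (key lam _ hgE hgE').mpr ⟨k1, k2⟩
    have hEval : (A * E).trace.re = ∑ i, max (lam i) 0 := by
      rw [htre E]
      refine Finset.sum_congr rfl fun i _ => ?_
      rcases lt_trichotomy (lam i) 0 with h | h | h
      · rw [hd2 i h]
        simp [max_eq_right h.le]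
      · simp [h]
      · rw [hd1 i h]
        simp [max_eq_left h.le]
    intro F hF hF'
    rw [hval F, hval E, hEval]
    have hb : (A * F).trace.re ≤ ∑ i, max (lam i) 0 := by
      rw [htre F]
      exact Finset.sum_le_sum fun i _ => termb _ _ (hdiag F hF hF' i).1 (hdiag F hF hF' i).2.1
    linarith
end

section
/- Let ψ be a unit vector in a d-dimensional Hilbert space with ⟨b_k|ψ⟩ ≠ 0 for all k, 0 < p < 1, and A = p·diag|ψ⟩⟨ψ| − (1−p)|ψ⟩⟨ψ|. A real number α ≤ 0 is an eigenvalue of A if and only if f_ψ(−α/p) = p/(1−p), where f_ψ(z) = ∑_k |ψ_k|²/(z+|ψ_k|²). Consequently, A has exactly one non-positive eigenvalue when p ≤ d/(d+1) (which is simple, zero iff p = d/(d+1)), and no non-positive eigenvalue when p > d/(d+1). -/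
open Matrix

/-- `HasEigen A α`: the real number α is an eigenvalue of the matrix A. -/
def HasEigen {d : ℕ} (A : Matrix (Fin d) (Fin d) ℂ) (α : ℝ) : Prop :=
  ∃ φ : Fin d → ℂ, φ ≠ 0 ∧ A *ᵥ φ = (α : ℂ) • φ

noncomputable def gfun {d : ℕ} (ψ : Fin d → ℂ) (z : ℝ) : ℝ :=
  ∑ k, ‖ψ k‖ ^ 2 / (z + ‖ψ k‖ ^ 2)

lemma hstar_aux (w : ℂ) : w * star w = ((‖w‖ : ℂ)) ^ 2 := by
  rw [show star w = (starRingEnd ℂ) w from rfl, Complex.mul_conj, Complex.normSq_eq_norm_sq]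
  push_cast
  ring

lemma eigen_component {d : ℕ} (ψ : Fin d → ℂ) (p α : ℝ) (hp0 : 0 < p)
    (A : Matrix (Fin d) (Fin d) ℂ)
    (hA : A = (p : ℂ) • Matrix.diagonal (fun k => ψ k * star (ψ k)) -
      ((1 : ℂ) - (p : ℂ)) • vecMulVec ψ (star ψ))
    (φ : Fin d → ℂ) :
    A *ᵥ φ = (α : ℂ) • φ ↔
      ∀ k, (p : ℂ) * (((-α / p + ‖ψ k‖ ^ 2 : ℝ)) : ℂ) * φ k
        = ((1 : ℂ) - p) * (ψ k * ∑ j, star (ψ j) * φ j) := by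
  have hp : (p : ℂ) ≠ 0 := Complex.ofReal_ne_zero.mpr hp0.ne'
  rw [hA, funext_iff]
  refine forall_congr' fun k => ?_
  have hc : (p : ℂ) * (((-α / p + ‖ψ k‖ ^ 2 : ℝ)) : ℂ)
      = -(α : ℂ) + (p : ℂ) * ((‖ψ k‖ : ℂ)) ^ 2 := by
    push_cast
    field_simp
  have h1 : (Matrix.diagonal (fun k => ψ k * star (ψ k)) *ᵥ φ) k
      = ψ k * star (ψ k) * φ k := by
    simp [Matrix.mulVec_diagonal]
  have h2 : (vecMulVec ψ (star ψ) *ᵥ φ) k = ψ k * ∑ j, star (ψ j) * φ j := by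
    simp [vecMulVec, mulVec, dotProduct, Finset.mul_sum, mul_assoc]
  have hlhs : ((((p : ℂ)) • Matrix.diagonal (fun k => ψ k * star (ψ k)) -
      ((1 : ℂ) - (p : ℂ)) • vecMulVec ψ (star ψ)) *ᵥ φ) k
      = (p : ℂ) * (ψ k * star (ψ k)) * φ k
        - ((1 : ℂ) - p) * (ψ k * ∑ j, star (ψ j) * φ j) := by
    rw [Matrix.sub_mulVec]
    simp only [Pi.sub_apply, Matrix.smul_mulVec, Pi.smul_apply, smul_eq_mul, h1, h2]
    ring
  rw [hlhs, Pi.smul_apply, smul_eq_mul]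
  constructor
  · intro h
    rw [hc]
    linear_combination h - (p : ℂ) * φ k * hstar_aux (ψ k)
  · intro h
    rw [hc] at h
    linear_combination h + (p : ℂ) * φ k * hstar_aux (ψ k)

lemma eigen_iff {d : ℕ} (hd : 0 < d) (ψ : Fin d → ℂ) (hψk : ∀ k, ψ k ≠ 0)
    (p : ℝ) (hp0 : 0 < p) (hp1 : p < 1)
    (A : Matrix (Fin d) (Fin d) ℂ)
    (hA : A = (p : ℂ) • Matrix.diagonal (fun k => ψ k * star (ψ k)) -
      ((1 : ℂ) - (p : ℂ)) • vecMulVec ψ (star ψ))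
    (α : ℝ) (hα : α ≤ 0) :
    HasEigen A α ↔ gfun ψ (-α / p) = p / (1 - p) := by
  have hp : (p : ℂ) ≠ 0 := Complex.ofReal_ne_zero.mpr hp0.ne'
  have h1p : ((1 : ℂ) - p) ≠ 0 := by
    have : ((1 - p : ℝ) : ℂ) ≠ 0 := Complex.ofReal_ne_zero.mpr (by linarith)
    simpa using this
  set z : ℝ := -α / p with hzdef
  have hz : 0 ≤ z := div_nonneg (by linarith) hp0.le
  have hD : ∀ k, 0 < z + ‖ψ k‖ ^ 2 := fun k =>
    add_pos_of_nonneg_of_pos hz (pow_pos (norm_pos_iff.mpr (hψk k)) 2)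
  have hDne : ∀ k, ((z : ℂ) + ((‖ψ k‖ : ℂ)) ^ 2) ≠ 0 := by
    intro k
    have h := Complex.ofReal_ne_zero.mpr (hD k).ne'
    push_cast at h
    exact h
  have hG : ((gfun ψ z : ℝ) : ℂ) = ∑ k, ((‖ψ k‖ : ℂ)) ^ 2 / ((z : ℂ) + ((‖ψ k‖ : ℂ)) ^ 2) := by
    rw [gfun]
    push_cast
    rfl
  constructor
  · rintro ⟨φ, hφ0, hφ⟩
    rw [eigen_component ψ p α hp0 A hA] at hφ
    rw [← hzdef] at hφ
    push_cast at hφ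
    set S : ℂ := ∑ j, star (ψ j) * φ j with hSdef
    have hS : S ≠ 0 := by
      intro h0
      apply hφ0
      funext k
      have h := hφ k
      rw [h0, mul_zero, mul_zero, mul_eq_zero, mul_eq_zero] at h
      rcases h with (h | h) | h
      · exact absurd h hp
      · exact absurd h (hDne k)
      · exact h
    have key2 : ∀ k, (p : ℂ) * (star (ψ k) * φ k)
        = ((1 : ℂ) - p) * S * (((‖ψ k‖ : ℂ)) ^ 2 / ((z : ℂ) + ((‖ψ k‖ : ℂ)) ^ 2)) := by
      intro k
      rw [← mul_div_assoc, eq_div_iff (hDne k)]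
      linear_combination star (ψ k) * hφ k + ((1 : ℂ) - p) * S * hstar_aux (ψ k)
    have hsum : S * (p : ℂ) = S * (((1 : ℂ) - p) * ((gfun ψ z : ℝ) : ℂ)) := by
      calc S * (p : ℂ) = ∑ k, (p : ℂ) * (star (ψ k) * φ k) := by
            rw [hSdef, Finset.sum_mul]; exact Finset.sum_congr rfl fun k _ => by ring
        _ = ∑ k, ((1 : ℂ) - p) * S * (((‖ψ k‖ : ℂ)) ^ 2 / ((z : ℂ) + ((‖ψ k‖ : ℂ)) ^ 2)) :=
            Finset.sum_congr rfl fun k _ => key2 k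
        _ = ((1 : ℂ) - p) * S * ∑ k, (((‖ψ k‖ : ℂ)) ^ 2 / ((z : ℂ) + ((‖ψ k‖ : ℂ)) ^ 2)) := by
            rw [← Finset.mul_sum]
        _ = S * (((1 : ℂ) - p) * ((gfun ψ z : ℝ) : ℂ)) := by rw [hG]; ring
    have hc : (p : ℂ) = ((1 : ℂ) - p) * ((gfun ψ z : ℝ) : ℂ) := mul_left_cancel₀ hS hsum
    have hreal : p = (1 - p) * gfun ψ z := by exact_mod_cast hc
    rw [eq_div_iff (by linarith : (1 : ℝ) - p ≠ 0)]
    linarith [hreal]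
  · intro hg
    refine ⟨fun k => ψ k / ((z : ℂ) + ((‖ψ k‖ : ℂ)) ^ 2), ?_, ?_⟩
    · intro h0
      have h := congrFun h0 ⟨0, hd⟩
      simp only [Pi.zero_apply, div_eq_zero_iff] at h
      rcases h with h | h
      · exact hψk _ h
      · exact hDne _ h
    · rw [eigen_component ψ p α hp0 A hA, ← hzdef]
      intro k
      have hS : (∑ j, star (ψ j) * (ψ j / ((z : ℂ) + ((‖ψ j‖ : ℂ)) ^ 2)))
          = ((p / (1 - p) : ℝ) : ℂ) := by
        rw [← hg, hG]
        refine Finset.sum_congr rfl fun j _ => ?_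
        rw [← mul_div_assoc, mul_comm (star (ψ j)) (ψ j), hstar_aux]
      rw [hS]
      push_cast
      rw [mul_assoc, ← mul_div_assoc, mul_div_cancel_left₀ _ (hDne k)]
      field_simp

lemma eigen_simple {d : ℕ} (ψ : Fin d → ℂ) (hψk : ∀ k, ψ k ≠ 0)
    (p : ℝ) (hp0 : 0 < p) (hp1 : p < 1)
    (A : Matrix (Fin d) (Fin d) ℂ)
    (hA : A = (p : ℂ) • Matrix.diagonal (fun k => ψ k * star (ψ k)) -
      ((1 : ℂ) - (p : ℂ)) • vecMulVec ψ (star ψ))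
    (α : ℝ) (hα : α ≤ 0)
    (φ₁ : Fin d → ℂ) (h10 : φ₁ ≠ 0) (h1 : A *ᵥ φ₁ = (α : ℂ) • φ₁)
    (φ₂ : Fin d → ℂ) (h2 : A *ᵥ φ₂ = (α : ℂ) • φ₂) : ∃ c : ℂ, φ₂ = c • φ₁ := by
  have hp : (p : ℂ) ≠ 0 := Complex.ofReal_ne_zero.mpr hp0.ne'
  set z : ℝ := -α / p with hzdef
  have hz : 0 ≤ z := div_nonneg (by linarith) hp0.le
  have hD : ∀ k, 0 < z + ‖ψ k‖ ^ 2 := fun k =>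
    add_pos_of_nonneg_of_pos hz (pow_pos (norm_pos_iff.mpr (hψk k)) 2)
  have hDne : ∀ k, ((z : ℂ) + ((‖ψ k‖ : ℂ)) ^ 2) ≠ 0 := by
    intro k
    have h := Complex.ofReal_ne_zero.mpr (hD k).ne'
    push_cast at h
    exact h
  rw [eigen_component ψ p α hp0 A hA, ← hzdef] at h1 h2
  push_cast at h1 h2
  set S₁ : ℂ := ∑ j, star (ψ j) * φ₁ j with hS1def
  set S₂ : ℂ := ∑ j, star (ψ j) * φ₂ j with hS2def
  have hS1 : S₁ ≠ 0 := by
    intro h0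
    apply h10
    funext k
    have h := h1 k
    rw [h0, mul_zero, mul_zero, mul_eq_zero, mul_eq_zero] at h
    rcases h with (h | h) | h
    · exact absurd h hp
    · exact absurd h (hDne k)
    · exact h
  refine ⟨S₂ / S₁, funext fun k => ?_⟩
  have hc : S₂ / S₁ * S₁ = S₂ := div_mul_cancel₀ _ hS1
  have hkey : (p : ℂ) * ((z : ℂ) + ((‖ψ k‖ : ℂ)) ^ 2) * (φ₂ k - S₂ / S₁ * φ₁ k) = 0 := by
    linear_combination h2 k - S₂ / S₁ * h1 k - ((1 : ℂ) - p) * ψ k * hc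
  rw [mul_eq_zero, mul_eq_zero] at hkey
  rcases hkey with (h | h) | h
  · exact absurd h hp
  · exact absurd h (hDne k)
  · have : φ₂ k = S₂ / S₁ * φ₁ k := by linear_combination h
    simpa using this

lemma gfun_strictAntiOn {d : ℕ} (hd : 0 < d) (ψ : Fin d → ℂ) (hψk : ∀ k, ψ k ≠ 0) :
    StrictAntiOn (gfun ψ) (Set.Ici 0) := by
  intro x hx y hy hxy
  refine Finset.sum_lt_sum_of_nonempty
    (Finset.univ_nonempty_iff.mpr (Fin.pos_iff_nonempty.mp hd)) fun k _ => ?_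
  have hk : 0 < ‖ψ k‖ ^ 2 := pow_pos (norm_pos_iff.mpr (hψk k)) 2
  have hx0 : (0 : ℝ) ≤ x := hx
  exact div_lt_div_of_pos_left hk (by linarith) (by linarith)

lemma gfun_zero {d : ℕ} (ψ : Fin d → ℂ) (hψk : ∀ k, ψ k ≠ 0) : gfun ψ 0 = d := by
  rw [gfun]
  have h : ∀ k : Fin d, ‖ψ k‖ ^ 2 / (0 + ‖ψ k‖ ^ 2) = 1 := fun k => by
    rw [zero_add, div_self (pow_pos (norm_pos_iff.mpr (hψk k)) 2).ne']
  rw [Finset.sum_congr rfl fun k _ => h k]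
  simp

lemma gfun_lt {d : ℕ} (hd : 0 < d) (ψ : Fin d → ℂ) (hψ : ∑ k, ‖ψ k‖ ^ 2 = 1)
    (hψk : ∀ k, ψ k ≠ 0) {Z : ℝ} (hZ : 0 < Z) : gfun ψ Z < 1 / Z := by
  rw [gfun]
  have h : ∑ k, ‖ψ k‖ ^ 2 / (Z + ‖ψ k‖ ^ 2) < ∑ k, ‖ψ k‖ ^ 2 / Z := by
    refine Finset.sum_lt_sum_of_nonempty
      (Finset.univ_nonempty_iff.mpr (Fin.pos_iff_nonempty.mp hd)) fun k _ => ?_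
    have hk : 0 < ‖ψ k‖ ^ 2 := pow_pos (norm_pos_iff.mpr (hψk k)) 2
    exact div_lt_div_of_pos_left hk hZ (by linarith)
  calc ∑ k, ‖ψ k‖ ^ 2 / (Z + ‖ψ k‖ ^ 2) < ∑ k, ‖ψ k‖ ^ 2 / Z := h
    _ = 1 / Z := by rw [← Finset.sum_div, hψ]

lemma gfun_contOn {d : ℕ} (ψ : Fin d → ℂ) (hψk : ∀ k, ψ k ≠ 0) :
    ContinuousOn (gfun ψ) (Set.Ici 0) := by
  unfold gfun
  refine continuousOn_finset_sum _ fun k _ => ContinuousOn.div continuousOn_const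
    ((continuous_id.add continuous_const).continuousOn) fun x hx => ?_
  have hx0 : (0 : ℝ) ≤ x := hx
  have : 0 < x + ‖ψ k‖ ^ 2 :=
    add_pos_of_nonneg_of_pos hx0 (pow_pos (norm_pos_iff.mpr (hψk k)) 2)
  exact this.ne'

/-- non-positive eigenvalues of A = p diag|ψ⟩⟨ψ| − (1−p)|ψ⟩⟨ψ|. -/
theorem stmt_6 (d : ℕ) (hd : 2 ≤ d) (ψ : Fin d → ℂ)
    (hψ : ∑ k, ‖ψ k‖ ^ 2 = 1) (hψk : ∀ k, ψ k ≠ 0)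
    (p : ℝ) (hp0 : 0 < p) (hp1 : p < 1)
    (A : Matrix (Fin d) (Fin d) ℂ)
    (hA : A = (p : ℂ) • Matrix.diagonal (fun k => ψ k * star (ψ k)) -
      ((1 : ℂ) - (p : ℂ)) • vecMulVec ψ (star ψ)) :
    (∀ α : ℝ, α ≤ 0 →
      (HasEigen A α ↔ ∑ k, ‖ψ k‖ ^ 2 / (-α / p + ‖ψ k‖ ^ 2) = p / (1 - p))) ∧
    (p ≤ d / (d + 1) →
      ∃ α : ℝ, α ≤ 0 ∧ HasEigen A α ∧
        (∀ β : ℝ, β ≤ 0 → HasEigen A β → β = α) ∧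
        (α = 0 ↔ p = d / (d + 1)) ∧
        (∀ φ₁ : Fin d → ℂ, φ₁ ≠ 0 → A *ᵥ φ₁ = (α : ℂ) • φ₁ →
          ∀ φ₂ : Fin d → ℂ, A *ᵥ φ₂ = (α : ℂ) • φ₂ → ∃ c : ℂ, φ₂ = c • φ₁)) ∧
    ((d : ℝ) / (d + 1) < p → ¬ ∃ α : ℝ, α ≤ 0 ∧ HasEigen A α) := by
  have hdpos : 0 < d := by omega
  have h1p : (0 : ℝ) < 1 - p := by linarith
  have hd1 : (0 : ℝ) < (d : ℝ) + 1 := by positivity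
  have hEig : ∀ α : ℝ, α ≤ 0 → (HasEigen A α ↔ gfun ψ (-α / p) = p / (1 - p)) :=
    fun α hα => eigen_iff hdpos ψ hψk p hp0 hp1 A hA α hα
  have hg0 : gfun ψ 0 = d := gfun_zero ψ hψk
  have hanti := gfun_strictAntiOn hdpos ψ hψk
  refine ⟨fun α hα => hEig α hα, ?_, ?_⟩
  · intro hple
    have h' : p * ((d : ℝ) + 1) ≤ d := (le_div_iff₀ hd1).mp hple
    have hple' : p / (1 - p) ≤ d := by
      rw [div_le_iff₀ h1p]
      nlinarith
    set Z : ℝ := (1 - p) / p with hZdef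
    have hZpos : 0 < Z := div_pos h1p hp0
    have hgZ : gfun ψ Z < p / (1 - p) := by
      have := gfun_lt hdpos ψ hψ hψk hZpos
      rwa [hZdef, one_div_div] at this
    have hmem : p / (1 - p) ∈ Set.Icc (gfun ψ Z) (gfun ψ 0) :=
      ⟨hgZ.le, by rw [hg0]; exact hple'⟩
    obtain ⟨z, hzmem, hgz⟩ := intermediate_value_Icc' hZpos.le
      ((gfun_contOn ψ hψk).mono Set.Icc_subset_Ici_self) hmem
    have hz0 : 0 ≤ z := hzmem.1
    refine ⟨-p * z, by nlinarith, ?_, ?_, ?_, ?_⟩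
    · refine (hEig (-p * z) (by nlinarith)).mpr ?_
      have : -(-p * z) / p = z := by field_simp
      rw [this]
      exact hgz
    · intro β hβ hEβ
      have hgβ := (hEig β hβ).mp hEβ
      have hmemβ : -β / p ∈ Set.Ici (0 : ℝ) := div_nonneg (by linarith) hp0.le
      have hmemz : z ∈ Set.Ici (0 : ℝ) := hz0
      have heq : -β / p = z := hanti.injOn hmemβ hmemz (hgβ.trans hgz.symm)
      have : -β = p * z := by
        rw [← heq]
        field_simp
      linarith [this]
    · constructor
      · intro h0
        have hz00 : z = 0 := by
          rcases mul_eq_zero.mp h0 with h | h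
          · exact absurd h (by simpa using hp0.ne')
          · exact h
        rw [hz00, hg0] at hgz
        rw [eq_div_iff hd1.ne']
        have hdd : (d : ℝ) * (1 - p) = p := by
          rw [eq_div_iff h1p.ne'] at hgz
          linarith
        nlinarith
      · intro hpd
        have hpd' : p * ((d : ℝ) + 1) = d := by
          rw [hpd]
          field_simp
        have hpg : p / (1 - p) = d := by
          rw [div_eq_iff h1p.ne']
          nlinarith
        have : gfun ψ z = gfun ψ 0 := by rw [hgz, hg0, hpg]
        have hz00 : z = 0 := hanti.injOn hzmem.1 Set.self_mem_Ici this
        rw [hz00, mul_zero]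
    · intro φ₁ h10 h1 φ₂ h2
      exact eigen_simple ψ hψk p hp0 hp1 A hA (-p * z) (by nlinarith) φ₁ h10 h1 φ₂ h2
  · rintro hlt ⟨α, hα, hE⟩
    have hgα := (hEig α hα).mp hE
    have hmem : -α / p ∈ Set.Ici (0 : ℝ) := div_nonneg (by linarith) hp0.le
    have hle : gfun ψ (-α / p) ≤ gfun ψ 0 :=
      hanti.antitoneOn Set.self_mem_Ici hmem hmem
    have hdlt : (d : ℝ) < p / (1 - p) := by
      rw [lt_div_iff₀ h1p]
      have := (div_lt_iff₀ hd1).mp hlt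
      nlinarith
    rw [hgα, hg0] at hle
    linarith
end

section
/- Let ψ be a unit vector in C^d with all components nonzero and p ≥ d/(d+1), p < 1. Then for every operator 0 ≤ E ≤ I, the reliability R_{ψ,p}(E) = p⟨ψ|diag E|ψ⟩ + (1−p)⟨ψ|(I−E)|ψ⟩ is at most p; i.e., no experiment is more reliable than blindly guessing that collapse occurred. -/
open Matrix
open scoped ComplexOrder

/-- for p ≥ d/(d+1), no experiment beats blind guessing "collapse". -/
theorem stmt_8 (d : ℕ) (hd : 2 ≤ d) (ψ : Fin d → ℂ)
    (hψ : ∑ k, ‖ψ k‖ ^ 2 = 1) (hψk : ∀ k, ψ k ≠ 0)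
    (p : ℝ) (hp0 : (d : ℝ) / (d + 1) ≤ p) (hp1 : p < 1)
    (E : Matrix (Fin d) (Fin d) ℂ) (hE : E.PosSemidef) (hE' : (1 - E).PosSemidef) :
    ((p : ℂ) * (star ψ ⬝ᵥ (Matrix.diagonal (fun k => E k k) *ᵥ ψ)) +
      ((1 : ℂ) - (p : ℂ)) * (star ψ ⬝ᵥ ((1 - E) *ᵥ ψ))).re ≤ p := by
  classical
  obtain ⟨B, hB⟩ : ∃ B : Matrix (Fin d) (Fin d) ℂ, 1 - E = Bᴴ * B := by
    open scoped MatrixOrder in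
    obtain ⟨B, hB⟩ := CStarAlgebra.nonneg_iff_eq_star_mul_self.mp hE'.nonneg
    exact ⟨B, by rw [hB, Matrix.star_eq_conjTranspose]⟩
  set u : Fin d → ℝ := fun k => Real.sqrt (∑ i, ‖B i k‖ ^ 2) with hu
  have hu0 : ∀ k, 0 ≤ u k := fun k => Real.sqrt_nonneg _
  -- diagonal entries of 1 - E
  have hFdiag : ∀ k, ((1 - E) k k).re = u k ^ 2 := by
    intro k
    rw [hB, hu]
    rw [Real.sq_sqrt (by positivity)]
    have h : (Bᴴ * B) k k = ∑ i, (starRingEnd ℂ) (B i k) * B i k := by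
      simp [Matrix.mul_apply, Matrix.conjTranspose_apply]
    rw [h, Complex.re_sum]
    refine Finset.sum_congr rfl fun i _ => ?_
    rw [← Complex.normSq_eq_conj_mul_self, Complex.ofReal_re]
    simp [Complex.normSq_eq_norm_sq]
  -- off-diagonal bound
  have hFnorm : ∀ j k, ‖(1 - E) j k‖ ≤ u j * u k := by
    intro j k
    rw [hB]
    calc ‖(Bᴴ * B) j k‖ = ‖∑ i, (starRingEnd ℂ) (B i j) * B i k‖ := by
          simp [Matrix.mul_apply, Matrix.conjTranspose_apply]
      _ ≤ ∑ i, ‖(starRingEnd ℂ) (B i j) * B i k‖ := norm_sum_le _ _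
      _ = ∑ i, ‖B i j‖ * ‖B i k‖ := by simp
      _ ≤ u j * u k := Real.sum_mul_le_sqrt_mul_sqrt _ _ _
  set Av : ℝ := ∑ k, ‖ψ k‖ ^ 2 * u k ^ 2 with hAv
  have hAv0 : 0 ≤ Av := Finset.sum_nonneg fun k _ => by positivity
  -- real part of the diagonal term
  have hS1 : (star ψ ⬝ᵥ (Matrix.diagonal (fun k => E k k) *ᵥ ψ)).re = 1 - Av := by
    have hE1 : ∀ k, (E k k).re = 1 - u k ^ 2 := by
      intro k
      have := hFdiag k
      simp only [Matrix.sub_apply, Matrix.one_apply_eq, Complex.sub_re,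
        Complex.one_re] at this
      linarith
    simp only [dotProduct, Matrix.mulVec_diagonal, Pi.star_apply]
    rw [Complex.re_sum]
    have hterm : ∀ k, ((starRingEnd ℂ) (ψ k) * (E k k * ψ k)).re
        = (E k k).re * ‖ψ k‖ ^ 2 := by
      intro k
      have h : (starRingEnd ℂ) (ψ k) * (E k k * ψ k)
          = E k k * ((Complex.normSq (ψ k) : ℝ) : ℂ) := by
        rw [← Complex.mul_conj]; ring
      rw [h, Complex.mul_re, Complex.ofReal_re, Complex.ofReal_im]
      simp [Complex.normSq_eq_norm_sq]
    calc (∑ k, ((starRingEnd ℂ) (ψ k) * (E k k * ψ k)).re)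
        = ∑ k, (E k k).re * ‖ψ k‖ ^ 2 := by
          exact Finset.sum_congr rfl fun k _ => hterm k
      _ = ∑ k, (‖ψ k‖ ^ 2 - ‖ψ k‖ ^ 2 * u k ^ 2) := by
          exact Finset.sum_congr rfl fun k _ => by rw [hE1 k]; ring
      _ = 1 - Av := by rw [Finset.sum_sub_distrib, hψ, hAv]
  -- bound on the second term
  have hS2 : (star ψ ⬝ᵥ ((1 - E) *ᵥ ψ)).re ≤ (d : ℝ) * Av := by
    calc (star ψ ⬝ᵥ ((1 - E) *ᵥ ψ)).re
        ≤ ‖star ψ ⬝ᵥ ((1 - E) *ᵥ ψ)‖ := Complex.re_le_norm _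
      _ = ‖∑ j, (starRingEnd ℂ) (ψ j) * ∑ k, (1 - E) j k * ψ k‖ := by
          simp [dotProduct, Matrix.mulVec, Pi.star_apply]
      _ ≤ ∑ j, ‖(starRingEnd ℂ) (ψ j) * ∑ k, (1 - E) j k * ψ k‖ := norm_sum_le _ _
      _ = ∑ j, ‖ψ j‖ * ‖∑ k, (1 - E) j k * ψ k‖ := by simp
      _ ≤ ∑ j, ‖ψ j‖ * ∑ k, ‖(1 - E) j k‖ * ‖ψ k‖ := by
          refine Finset.sum_le_sum fun j _ => mul_le_mul_of_nonneg_left ?_ (norm_nonneg _)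
          calc ‖∑ k, (1 - E) j k * ψ k‖ ≤ ∑ k, ‖(1 - E) j k * ψ k‖ :=
                  norm_sum_le _ _
            _ = ∑ k, ‖(1 - E) j k‖ * ‖ψ k‖ := by simp
      _ ≤ ∑ j, ‖ψ j‖ * ∑ k, (u j * u k) * ‖ψ k‖ :=
          Finset.sum_le_sum fun j _ => mul_le_mul_of_nonneg_left
            (Finset.sum_le_sum fun k _ =>
              mul_le_mul_of_nonneg_right (hFnorm j k) (norm_nonneg _))
            (norm_nonneg _)
      _ = (∑ k, ‖ψ k‖ * u k) ^ 2 := by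
          rw [sq, Finset.sum_mul_sum]
          refine Finset.sum_congr rfl fun j _ => ?_
          rw [Finset.mul_sum]
          exact Finset.sum_congr rfl fun k _ => by ring
      _ ≤ (Finset.univ.card : ℝ) * ∑ k, (‖ψ k‖ * u k) ^ 2 :=
          sq_sum_le_card_mul_sum_sq
      _ = (d : ℝ) * Av := by
          rw [hAv]
          simp only [Finset.card_univ, Fintype.card_fin]
          congr 1
          exact Finset.sum_congr rfl fun k _ => mul_pow _ _ 2
  -- real part of the whole expression
  have hre : ((p : ℂ) * (star ψ ⬝ᵥ (Matrix.diagonal (fun k => E k k) *ᵥ ψ)) +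
      ((1 : ℂ) - (p : ℂ)) * (star ψ ⬝ᵥ ((1 - E) *ᵥ ψ))).re
      = p * (1 - Av) + (1 - p) * (star ψ ⬝ᵥ ((1 - E) *ᵥ ψ)).re := by
    rw [Complex.add_re, Complex.mul_re, Complex.mul_re, hS1]
    simp
  rw [hre]
  -- arithmetic
  have hd1 : (d : ℝ) ≤ p * ((d : ℝ) + 1) := by
    rw [div_le_iff₀ (by positivity)] at hp0
    linarith
  have h1 : (1 - p) * (star ψ ⬝ᵥ ((1 - E) *ᵥ ψ)).re ≤ (1 - p) * ((d : ℝ) * Av) :=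
    mul_le_mul_of_nonneg_left hS2 (by linarith)
  have h2 : (1 - p) * ((d : ℝ) * Av) ≤ p * Av := by nlinarith
  linarith
end

section
/- For any unit vector ψ ∈ C^d and 0 < p < 1, the maximal reliability satisfies max(p, 1 − p∑_k|ψ_k|⁴) ≤ R_p^max(ψ) ≤ max(p, 1 − p/d), where R_p^max(ψ) is the supremum over 0 ≤ E ≤ I of p⟨ψ|diag E|ψ⟩ + (1−p)⟨ψ|(I−E)|ψ⟩. -/
open Matrix
open scoped ComplexOrder

namespace Stmt9Aux

variable {d : ℕ}

lemma two_point_expand (A : Matrix (Fin d) (Fin d) ℂ) (j k : Fin d) (a b : ℂ) :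
    (star (Pi.single j a + Pi.single k b) ⬝ᵥ (A *ᵥ (Pi.single j a + Pi.single k b))) =
      (starRingEnd ℂ) a * a * A j j + (starRingEnd ℂ) a * b * A j k
        + (starRingEnd ℂ) b * a * A k j + (starRingEnd ℂ) b * b * A k k := by
  rw [Matrix.mulVec_add, star_add, add_dotProduct, dotProduct_add, dotProduct_add,
    ← Pi.single_star, ← Pi.single_star]
  simp only [Matrix.mulVec_single, single_dotProduct, Pi.smul_apply, op_smul_eq_mul, Matrix.col_apply]
  push_cast [RCLike.star_def]
  ring

lemma form_re_nonneg {A : Matrix (Fin d) (Fin d) ℂ} (hA : A.PosSemidef) (x : Fin d → ℂ) :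
    0 ≤ (star x ⬝ᵥ (A *ᵥ x)).re := by
  simpa using hA.re_dotProduct_nonneg x

lemma diag_im_zero {A : Matrix (Fin d) (Fin d) ℂ} (hA : A.PosSemidef) (k : Fin d) :
    (A k k).im = 0 := by
  have h := congrFun (congrFun hA.1 k) k
  simp only [Matrix.conjTranspose_apply] at h
  have := congrArg Complex.im h
  simp only [Complex.conj_im, RCLike.star_def] at this
  linarith

lemma diag_re_nonneg {A : Matrix (Fin d) (Fin d) ℂ} (hA : A.PosSemidef) (k : Fin d) :
    0 ≤ (A k k).re := by
  have h := form_re_nonneg hA (Pi.single k 1)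
  have h2 : (star (Pi.single k 1 : Fin d → ℂ)) ⬝ᵥ (A *ᵥ Pi.single k 1) = A k k := by
    rw [← Pi.single_star]
    simp only [Matrix.mulVec_single, single_dotProduct, Pi.smul_apply, op_smul_eq_mul, Matrix.col_apply]
    simp
  rwa [h2] at h

lemma entry_bound {A : Matrix (Fin d) (Fin d) ℂ} (hA : A.PosSemidef) (j k : Fin d) :
    ‖A j k‖ ≤ Real.sqrt ((A j j).re) * Real.sqrt ((A k k).re) := by
  by_cases hjk : j = k
  · subst hjk
    have h1 : ‖A j j‖ = (A j j).re := by
      have : A j j = ((A j j).re : ℂ) := by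
        apply Complex.ext <;> simp [diag_im_zero hA j]
      rw [this, Complex.norm_real, Real.norm_eq_abs, abs_of_nonneg (diag_re_nonneg hA j),
        Complex.ofReal_re]
    rw [h1, Real.mul_self_sqrt (diag_re_nonneg hA j)]
  · set α := A j k with hα
    by_cases h0 : α = 0
    · rw [h0]
      simp [Real.sqrt_nonneg, mul_nonneg]
    · set c : ℝ := ‖α‖ ^ 2 with hcc
      have hc : (starRingEnd ℂ) α * α = (c : ℂ) := by
        rw [Complex.conj_mul', hcc]
        norm_cast
      have hkj : A k j = (starRingEnd ℂ) α := by
        have h := congrFun (congrFun hA.1 j) k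
        simp only [Matrix.conjTranspose_apply, RCLike.star_def] at h
        rw [hα, ← h, Complex.conj_conj]
      have hq : ∀ t : ℝ, 0 ≤ (A j j).re * (t * t) + (-(2 * c)) * t + c * (A k k).re := by
        intro t
        have h := form_re_nonneg hA (Pi.single j (t : ℂ) + Pi.single k (-(starRingEnd ℂ) α))
        rw [two_point_expand, hkj] at h
        have e1 : (starRingEnd ℂ) (t : ℂ) * (t : ℂ) * A j j
            + (starRingEnd ℂ) (t : ℂ) * (-(starRingEnd ℂ) α) * α
            + (starRingEnd ℂ) (-(starRingEnd ℂ) α) * (t : ℂ) * ((starRingEnd ℂ) α)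
            + (starRingEnd ℂ) (-(starRingEnd ℂ) α) * (-(starRingEnd ℂ) α) * A k k
            = (t : ℂ) * (t : ℂ) * A j j - 2 * (t : ℂ) * (c : ℂ)
              + (c : ℂ) * A k k := by
          simp only [map_neg, Complex.conj_conj, Complex.conj_ofReal]
          linear_combination (A k k - 2 * (t : ℂ)) * hc
        rw [e1] at h
        have e2 : ((t : ℂ) * (t : ℂ) * A j j - 2 * (t : ℂ) * (c : ℂ)
              + (c : ℂ) * A k k).re
            = (A j j).re * (t * t) + (-(2 * c)) * t + c * (A k k).re := by
          rw [Complex.add_re, Complex.sub_re, Complex.mul_re, Complex.mul_re, Complex.mul_re,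
            Complex.mul_re]
          simp only [Complex.ofReal_re, Complex.ofReal_im, Complex.mul_re, Complex.mul_im,
            Complex.re_ofNat, Complex.im_ofNat]
          ring
        rw [e2] at h
        exact h
      have hdisc := discrim_le_zero hq
      rw [discrim] at hdisc
      have hα2 : (0 : ℝ) < c := by
        rw [hcc]
        exact pow_pos (norm_pos_iff.mpr h0) 2
      have hle : c ≤ (A j j).re * (A k k).re := by nlinarith
      calc ‖α‖ = Real.sqrt c := by rw [hcc, Real.sqrt_sq (norm_nonneg _)]
      _ ≤ Real.sqrt ((A j j).re * (A k k).re) := Real.sqrt_le_sqrt hle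
      _ = Real.sqrt ((A j j).re) * Real.sqrt ((A k k).re) :=
          Real.sqrt_mul (diag_re_nonneg hA j) _

/-- key: ⟨ψ|A|ψ⟩.re ≤ d * Σ |ψ_k|² (A k k).re for PSD A -/
lemma key_ineq {A : Matrix (Fin d) (Fin d) ℂ} (hA : A.PosSemidef) (ψ : Fin d → ℂ) :
    (star ψ ⬝ᵥ (A *ᵥ ψ)).re ≤ (d : ℝ) * ∑ k, ‖ψ k‖ ^ 2 * (A k k).re := by
  set c : Fin d → ℝ := fun k => ‖ψ k‖ * Real.sqrt ((A k k).re) with hc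
  have hcnn : ∀ k, 0 ≤ c k := fun k => mul_nonneg (norm_nonneg _) (Real.sqrt_nonneg _)
  have expand : star ψ ⬝ᵥ (A *ᵥ ψ)
      = ∑ j, ∑ k, (starRingEnd ℂ) (ψ j) * (A j k * ψ k) := by
    simp [dotProduct, Matrix.mulVec, Finset.mul_sum]
  calc (star ψ ⬝ᵥ (A *ᵥ ψ)).re ≤ ‖star ψ ⬝ᵥ (A *ᵥ ψ)‖ := Complex.re_le_norm _
  _ = ‖∑ j, ∑ k, (starRingEnd ℂ) (ψ j) * (A j k * ψ k)‖ := by rw [expand]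
  _ ≤ ∑ j, ∑ k, ‖ψ j‖ * ‖A j k‖ * ‖ψ k‖ := by
      refine (norm_sum_le _ _).trans (Finset.sum_le_sum fun j _ => ?_)
      refine (norm_sum_le _ _).trans (Finset.sum_le_sum fun k _ => ?_)
      rw [norm_mul, norm_mul, RingHomIsometric.norm_map]
      ring_nf
      exact le_refl _
  _ ≤ ∑ j, ∑ k, c j * c k := by
      refine Finset.sum_le_sum fun j _ => Finset.sum_le_sum fun k _ => ?_
      have := entry_bound hA j k
      calc ‖ψ j‖ * ‖A j k‖ * ‖ψ k‖
          ≤ ‖ψ j‖ * (Real.sqrt ((A j j).re) * Real.sqrt ((A k k).re)) * ‖ψ k‖ := by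
            apply mul_le_mul_of_nonneg_right _ (norm_nonneg _)
            exact mul_le_mul_of_nonneg_left this (norm_nonneg _)
      _ = c j * c k := by rw [hc]; ring
  _ = (∑ k, c k) ^ 2 := by rw [sq, Finset.sum_mul_sum]
  _ ≤ (Finset.univ : Finset (Fin d)).card * ∑ k, c k ^ 2 := sq_sum_le_card_mul_sum_sq
  _ = (d : ℝ) * ∑ k, ‖ψ k‖ ^ 2 * (A k k).re := by
      congr 1
      · simp
      · refine Finset.sum_congr rfl fun k _ => ?_
        rw [hc, mul_pow, Real.sq_sqrt (diag_re_nonneg hA k)]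

lemma diag_form_re (E : Matrix (Fin d) (Fin d) ℂ) (ψ : Fin d → ℂ) :
    (star ψ ⬝ᵥ (Matrix.diagonal (fun k => E k k) *ᵥ ψ)).re
      = ∑ k, ‖ψ k‖ ^ 2 * (E k k).re := by
  have : star ψ ⬝ᵥ (Matrix.diagonal (fun k => E k k) *ᵥ ψ)
      = ∑ k, E k k * ((‖ψ k‖ ^ 2 : ℝ) : ℂ) := by
    simp only [Matrix.mulVec_diagonal, dotProduct, Pi.star_apply, RCLike.star_def]
    refine Finset.sum_congr rfl fun k _ => ?_
    rw [show (starRingEnd ℂ) (ψ k) * (E k k * ψ k)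
        = E k k * ((starRingEnd ℂ) (ψ k) * ψ k) by ring, Complex.conj_mul']
    push_cast
    ring
  rw [this, Complex.re_sum]
  refine Finset.sum_congr rfl fun k _ => ?_
  rw [Complex.mul_re, Complex.ofReal_re, Complex.ofReal_im, mul_zero, sub_zero, mul_comm]

end Stmt9Aux

open Stmt9Aux

/-- bounds on the maximal reliability. -/
theorem stmt_9 (d : ℕ) (hd : 0 < d) (ψ : Fin d → ℂ)
    (hψ : ∑ k, ‖ψ k‖ ^ 2 = 1)
    (p : ℝ) (hp0 : 0 < p) (hp1 : p < 1) :
    max p (1 - p * ∑ k, ‖ψ k‖ ^ 4) ≤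
      sSup {r : ℝ | ∃ E : Matrix (Fin d) (Fin d) ℂ, E.PosSemidef ∧ (1 - E).PosSemidef ∧
        r = ((p : ℂ) * (star ψ ⬝ᵥ (Matrix.diagonal (fun k => E k k) *ᵥ ψ)) +
          ((1 : ℂ) - (p : ℂ)) * (star ψ ⬝ᵥ ((1 - E) *ᵥ ψ))).re} ∧
    sSup {r : ℝ | ∃ E : Matrix (Fin d) (Fin d) ℂ, E.PosSemidef ∧ (1 - E).PosSemidef ∧
        r = ((p : ℂ) * (star ψ ⬝ᵥ (Matrix.diagonal (fun k => E k k) *ᵥ ψ)) +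
          ((1 : ℂ) - (p : ℂ)) * (star ψ ⬝ᵥ ((1 - E) *ᵥ ψ))).re} ≤
      max p (1 - p / d) := by
  set S := {r : ℝ | ∃ E : Matrix (Fin d) (Fin d) ℂ, E.PosSemidef ∧ (1 - E).PosSemidef ∧
        r = ((p : ℂ) * (star ψ ⬝ᵥ (Matrix.diagonal (fun k => E k k) *ᵥ ψ)) +
          ((1 : ℂ) - (p : ℂ)) * (star ψ ⬝ᵥ ((1 - E) *ᵥ ψ))).re} with hS
  have hd' : (1 : ℝ) ≤ (d : ℝ) := by exact_mod_cast hd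
  have hdpos : (0 : ℝ) < (d : ℝ) := by positivity
  -- norm of ψ as a complex number
  have hnorm : star ψ ⬝ᵥ ψ = 1 := by
    have : star ψ ⬝ᵥ ψ = ∑ k, ((‖ψ k‖ ^ 2 : ℝ) : ℂ) := by
      simp only [dotProduct, Pi.star_apply, RCLike.star_def]
      refine Finset.sum_congr rfl fun k _ => ?_
      rw [Complex.conj_mul']
      push_cast; ring
    rw [this, ← Complex.ofReal_sum, hψ, Complex.ofReal_one]
  -- a generic value formula
  have value_re : ∀ E : Matrix (Fin d) (Fin d) ℂ,
      ((p : ℂ) * (star ψ ⬝ᵥ (Matrix.diagonal (fun k => E k k) *ᵥ ψ)) +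
          ((1 : ℂ) - (p : ℂ)) * (star ψ ⬝ᵥ ((1 - E) *ᵥ ψ))).re
      = p * (∑ k, ‖ψ k‖ ^ 2 * (E k k).re) + (1 - p) * (star ψ ⬝ᵥ ((1 - E) *ᵥ ψ)).re := by
    intro E
    rw [Complex.add_re]
    congr 1
    · rw [show ((p : ℂ) * (star ψ ⬝ᵥ (Matrix.diagonal (fun k => E k k) *ᵥ ψ))).re
        = p * (star ψ ⬝ᵥ (Matrix.diagonal (fun k => E k k) *ᵥ ψ)).re by
          simp [Complex.mul_re, Complex.ofReal_re, Complex.ofReal_im]]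
      rw [diag_form_re]
    · rw [show ((1 : ℂ) - (p : ℂ)) = (((1 - p : ℝ)) : ℂ) by push_cast; ring]
      simp [Complex.mul_re, Complex.ofReal_re, Complex.ofReal_im]
  -- upper bound on all elements of S
  have hub : ∀ r ∈ S, r ≤ max p (1 - p / d) := by
    rintro r ⟨E, hE, hE', rfl⟩
    rw [value_re]
    set a : ℝ := ∑ k, ‖ψ k‖ ^ 2 * (E k k).re with ha
    set s : ℝ := (star ψ ⬝ᵥ ((1 - E) *ᵥ ψ)).re with hs
    have hs0 : 0 ≤ s := form_re_nonneg hE' ψ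
    have hs1 : s ≤ 1 := by
      have h1 : star ψ ⬝ᵥ ((1 - E) *ᵥ ψ) = 1 - star ψ ⬝ᵥ (E *ᵥ ψ) := by
        rw [Matrix.sub_mulVec, dotProduct_sub, Matrix.one_mulVec, hnorm]
      have h2 : 0 ≤ (star ψ ⬝ᵥ (E *ᵥ ψ)).re := form_re_nonneg hE ψ
      rw [hs, h1, Complex.sub_re, Complex.one_re]
      linarith
    -- key inequality: s ≤ d * (1 - a)
    have hkey : s ≤ (d : ℝ) * (1 - a) := by
      have h := key_ineq hE' ψ
      have heq : ∑ k, ‖ψ k‖ ^ 2 * (((1 - E : Matrix (Fin d) (Fin d) ℂ)) k k).re = 1 - a := by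
        have : ∀ k, (((1 - E : Matrix (Fin d) (Fin d) ℂ)) k k).re = 1 - (E k k).re := by
          intro k
          simp [Matrix.sub_apply, Matrix.one_apply_eq, Complex.sub_re]
        simp_rw [this, mul_sub, mul_one, Finset.sum_sub_distrib, hψ]
        rfl
      rw [heq] at h
      exact h
    -- combine
    have hcomb : p * a + (1 - p) * s ≤ p + s * (1 - p - p / d) := by
      have h1 : (p / d) * s ≤ p * (1 - a) := by
        have := mul_le_mul_of_nonneg_left hkey (le_of_lt (div_pos hp0 hdpos))
        calc (p / d) * s ≤ (p / d) * ((d : ℝ) * (1 - a)) := this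
        _ = p * (1 - a) := by field_simp
      nlinarith
    by_cases hc : 1 - p - p / d ≤ 0
    · have : p * a + (1 - p) * s ≤ p := by nlinarith
      exact this.trans (le_max_left _ _)
    · push_neg at hc
      have : p * a + (1 - p) * s ≤ 1 - p / d := by nlinarith
      exact this.trans (le_max_right _ _)
  have hbdd : BddAbove S := ⟨max p (1 - p / d), hub⟩
  -- membership 1 : E = 1 gives value p
  have hmem1 : p ∈ S := by
    refine ⟨1, Matrix.PosSemidef.one, by simpa using Matrix.PosSemidef.zero, ?_⟩
    have h1 : Matrix.diagonal (fun k => (1 : Matrix (Fin d) (Fin d) ℂ) k k) = 1 := by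
      simp [Matrix.one_apply_eq, Matrix.diagonal_one]
    rw [h1, Matrix.one_mulVec, hnorm, sub_self, Matrix.zero_mulVec, dotProduct_zero,
      mul_zero, add_zero, mul_one]
    simp
  -- membership 2 : E = 1 - |ψ⟩⟨ψ|
  have hmem2 : 1 - p * ∑ k, ‖ψ k‖ ^ 4 ∈ S := by
    set P : Matrix (Fin d) (Fin d) ℂ := Matrix.vecMulVec ψ (star ψ) with hP
    have hPmv : ∀ x : Fin d → ℂ, P *ᵥ x = (star ψ ⬝ᵥ x) • ψ := by
      intro x
      funext i
      simp [hP, Matrix.mulVec, Matrix.vecMulVec_apply, dotProduct, Finset.mul_sum,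
        Finset.sum_mul, mul_comm, mul_assoc, mul_left_comm]
    have hPherm : P.IsHermitian := by
      ext i j
      simp [hP, Matrix.conjTranspose_apply, Matrix.vecMulVec_apply, mul_comm]
    have hPform : ∀ x : Fin d → ℂ, star x ⬝ᵥ (P *ᵥ x)
        = (starRingEnd ℂ) (star ψ ⬝ᵥ x) * (star ψ ⬝ᵥ x) := by
      intro x
      rw [hPmv, dotProduct_smul]
      have : star x ⬝ᵥ ψ = (starRingEnd ℂ) (star ψ ⬝ᵥ x) := by
        simp [dotProduct, map_sum]
        refine Finset.sum_congr rfl fun k _ => ?_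
        simp [mul_comm]
      rw [this, smul_eq_mul]
      ring
    have hPpsd : P.PosSemidef := by
      refine Matrix.PosSemidef.of_dotProduct_mulVec_nonneg hPherm fun x => ?_
      rw [hPform, Complex.conj_mul']
      positivity
    have hCS : ∀ x : Fin d → ℂ, ‖star ψ ⬝ᵥ x‖ ^ 2 ≤ (star x ⬝ᵥ x).re := by
      intro x
      have hxx : (star x ⬝ᵥ x).re = ∑ k, ‖x k‖ ^ 2 := by
        have : star x ⬝ᵥ x = ∑ k, ((‖x k‖ ^ 2 : ℝ) : ℂ) := by
          simp only [dotProduct, Pi.star_apply, RCLike.star_def]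
          refine Finset.sum_congr rfl fun k _ => ?_
          rw [Complex.conj_mul']; push_cast; ring
        rw [this, ← Complex.ofReal_sum, Complex.ofReal_re]
      rw [hxx]
      have h1 : ‖star ψ ⬝ᵥ x‖ ≤ ∑ k, ‖ψ k‖ * ‖x k‖ := by
        refine (norm_sum_le _ _).trans (Finset.sum_le_sum fun k _ => ?_)
        simp [norm_mul]
      have h2 : (∑ k, ‖ψ k‖ * ‖x k‖) ^ 2 ≤ (∑ k, ‖ψ k‖ ^ 2) * ∑ k, ‖x k‖ ^ 2 :=
        Finset.sum_mul_sq_le_sq_mul_sq _ _ _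
      rw [hψ, one_mul] at h2
      calc ‖star ψ ⬝ᵥ x‖ ^ 2 ≤ (∑ k, ‖ψ k‖ * ‖x k‖) ^ 2 := by
            apply sq_le_sq' _ h1
            have : 0 ≤ ∑ k, ‖ψ k‖ * ‖x k‖ :=
              Finset.sum_nonneg fun k _ => mul_nonneg (norm_nonneg _) (norm_nonneg _)
            linarith [norm_nonneg (star ψ ⬝ᵥ x)]
      _ ≤ ∑ k, ‖x k‖ ^ 2 := h2
    refine ⟨1 - P, ?_, ?_, ?_⟩
    · -- (1 - P) PSD
      refine Matrix.PosSemidef.of_dotProduct_mulVec_nonneg ?_ ?_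
      · exact (Matrix.isHermitian_one).sub hPherm
      · intro x
        have hform : star x ⬝ᵥ ((1 - P) *ᵥ x) = star x ⬝ᵥ x
            - (starRingEnd ℂ) (star ψ ⬝ᵥ x) * (star ψ ⬝ᵥ x) := by
          rw [Matrix.sub_mulVec, dotProduct_sub, Matrix.one_mulVec, hPform]
        rw [hform, Complex.conj_mul', Complex.le_def]
        have him : (star x ⬝ᵥ x).im = 0 := by
          have : star x ⬝ᵥ x = ∑ k, ((‖x k‖ ^ 2 : ℝ) : ℂ) := by
            simp only [dotProduct, Pi.star_apply, RCLike.star_def]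
            refine Finset.sum_congr rfl fun k _ => ?_
            rw [Complex.conj_mul']; push_cast; ring
          rw [this, ← Complex.ofReal_sum, Complex.ofReal_im]
        constructor
        · simp only [Complex.zero_re, Complex.sub_re, ← Complex.ofReal_pow, Complex.ofReal_re]
          linarith [hCS x]
        · simp only [Complex.zero_im, Complex.sub_im, ← Complex.ofReal_pow, Complex.ofReal_im,
            him, sub_zero]
    · -- 1 - (1 - P) = P PSD
      simpa using hPpsd
    · -- the value
      have hsub : (1 : Matrix (Fin d) (Fin d) ℂ) - (1 - P) = P := sub_sub_cancel 1 P
      rw [hsub]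
      have hPψ : star ψ ⬝ᵥ (P *ᵥ ψ) = 1 := by
        rw [hPform, hnorm]
        simp
      rw [hPψ, mul_one]
      have hdiag : (star ψ ⬝ᵥ (Matrix.diagonal
          (fun k => (1 - P : Matrix (Fin d) (Fin d) ℂ) k k) *ᵥ ψ))
          = ((1 - ∑ k, ‖ψ k‖ ^ 4 : ℝ) : ℂ) := by
        have hdiagsum : star ψ ⬝ᵥ (Matrix.diagonal
            (fun k => (1 - P : Matrix (Fin d) (Fin d) ℂ) k k) *ᵥ ψ)
            = ∑ k, (1 - P k k) * ((‖ψ k‖ ^ 2 : ℝ) : ℂ) := by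
          simp only [Matrix.mulVec_diagonal, dotProduct, Pi.star_apply, RCLike.star_def,
            Matrix.sub_apply, Matrix.one_apply_eq]
          refine Finset.sum_congr rfl fun k _ => ?_
          rw [show (starRingEnd ℂ) (ψ k) * ((1 - P k k) * ψ k)
              = (1 - P k k) * ((starRingEnd ℂ) (ψ k) * ψ k) by ring, Complex.conj_mul']
          push_cast; ring
        rw [hdiagsum]
        have hPkk : ∀ k, P k k = ((‖ψ k‖ ^ 2 : ℝ) : ℂ) := by
          intro k
          simp only [hP, Matrix.vecMulVec_apply, Pi.star_apply, RCLike.star_def]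
          rw [mul_comm, Complex.conj_mul']
          push_cast; ring
        rw [Finset.sum_congr rfl fun k _ => by rw [hPkk k]]
        have hterm : ∀ k : Fin d, ((1 : ℂ) - ((‖ψ k‖ ^ 2 : ℝ) : ℂ)) * ((‖ψ k‖ ^ 2 : ℝ) : ℂ)
            = (((‖ψ k‖ ^ 2 - ‖ψ k‖ ^ 4 : ℝ)) : ℂ) := fun k => by push_cast; ring
        rw [Finset.sum_congr rfl fun k _ => hterm k, ← Complex.ofReal_sum,
          Finset.sum_sub_distrib, hψ]
      rw [hdiag]
      rw [show ((1 : ℂ) - (p : ℂ)) = (((1 - p : ℝ)) : ℂ) by push_cast; ring]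
      rw [← Complex.ofReal_mul, ← Complex.ofReal_add, Complex.ofReal_re]
      ring
  constructor
  · exact max_le (le_csSup hbdd hmem1) (le_csSup hbdd hmem2)
  · exact csSup_le ⟨p, hmem1⟩ hub
end

section
/- For the uniform state ψ with ψ_k = 1/√d for all k and 0 < p < d/(d+1), the operator E = I − |ψ⟩⟨ψ| is an optimal effect operator and the maximal reliability is R_p^max(ψ) = 1 − p/d. -/
open Matrix
open scoped ComplexOrder

set_option linter.unusedSectionVars false
namespace Stmt11Aux

variable {n : Type*} [Fintype n] [DecidableEq n]

lemma diag_re_nonneg {M : Matrix n n ℂ} (hM : M.PosSemidef) (i : n) :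
    0 ≤ (M i i).re := by
  have h := hM.re_dotProduct_nonneg (Pi.single i 1)
  simpa [dotProduct, mulVec, Pi.single_apply, Finset.sum_ite_eq] using h

lemma trace_re_nonneg {M : Matrix n n ℂ} (hM : M.PosSemidef) :
    0 ≤ (M.trace).re := by
  rw [Matrix.trace, Complex.re_sum]
  exact Finset.sum_nonneg fun i _ => diag_re_nonneg hM i

lemma trace_mul_re_nonneg {A B : Matrix n n ℂ} (hA : A.PosSemidef) (hB : B.PosSemidef) :
    0 ≤ ((A * B).trace).re := by
  obtain ⟨C, rfl⟩ := (by
    open scoped MatrixOrder Matrix.Norms.L2Operator in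
    exact CStarAlgebra.nonneg_iff_eq_star_mul_self.mp hA.nonneg : ∃ C : Matrix n n ℂ, A = Cᴴ * C)
  rw [Matrix.mul_assoc, Matrix.trace_mul_comm]
  exact trace_re_nonneg (hB.mul_mul_conjTranspose_same C)

variable (ψ : n → ℂ)

lemma P_herm : (vecMulVec ψ (star ψ))ᴴ = vecMulVec ψ (star ψ) := by
  ext i j
  simp [vecMulVec_apply, conjTranspose_apply, mul_comm]

lemma P_psd : (vecMulVec ψ (star ψ)).PosSemidef := by
  refine Matrix.PosSemidef.of_dotProduct_mulVec_nonneg (P_herm ψ) fun x => ?_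
  have : star x ⬝ᵥ (vecMulVec ψ (star ψ) *ᵥ x) = star (star ψ ⬝ᵥ x) * (star ψ ⬝ᵥ x) := by
    simp only [vecMulVec_apply, mulVec, dotProduct, star_sum, star_mul', star_star,
      Pi.star_apply, Finset.mul_sum, Finset.sum_mul]
    rw [Finset.sum_comm]
    refine Finset.sum_congr rfl fun i _ => Finset.sum_congr rfl fun j _ => by ring
  rw [this]
  exact star_mul_self_nonneg _

lemma P_mul_P (hψ : star ψ ⬝ᵥ ψ = 1) :
    vecMulVec ψ (star ψ) * vecMulVec ψ (star ψ) = vecMulVec ψ (star ψ) := by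
  ext i j
  simp only [mul_apply, vecMulVec_apply]
  calc ∑ k, ψ i * star ψ k * (ψ k * star ψ j)
      = (ψ i * star ψ j) * ∑ k, star ψ k * ψ k := by
        rw [Finset.mul_sum]; exact Finset.sum_congr rfl fun k _ => by ring
    _ = ψ i * star ψ j := by
        rw [show ∑ k, star ψ k * ψ k = star ψ ⬝ᵥ ψ from rfl, hψ, mul_one]

lemma Q_psd (hψ : star ψ ⬝ᵥ ψ = 1) : ((1 : Matrix n n ℂ) - vecMulVec ψ (star ψ)).PosSemidef := by
  have hQ : (1 : Matrix n n ℂ) - vecMulVec ψ (star ψ)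
      = ((1 : Matrix n n ℂ) - vecMulVec ψ (star ψ))ᴴ *
        ((1 : Matrix n n ℂ) - vecMulVec ψ (star ψ)) := by
    rw [conjTranspose_sub, conjTranspose_one, P_herm, Matrix.sub_mul, Matrix.one_mul,
      Matrix.mul_sub, Matrix.mul_one, P_mul_P ψ hψ]
    abel
  rw [hQ]
  exact posSemidef_conjTranspose_mul_self _

lemma trace_mul_P (F : Matrix n n ℂ) :
    (F * vecMulVec ψ (star ψ)).trace = star ψ ⬝ᵥ (F *ᵥ ψ) := by
  simp only [Matrix.trace, Matrix.diag, mul_apply, vecMulVec_apply, dotProduct, mulVec,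
    Finset.mul_sum]
  refine Finset.sum_congr rfl fun i _ => Finset.sum_congr rfl fun j _ => by ring

lemma dot_le_trace {F : Matrix n n ℂ} (hF : F.PosSemidef) (hψ : star ψ ⬝ᵥ ψ = 1) :
    (star ψ ⬝ᵥ (F *ᵥ ψ)).re ≤ (F.trace).re := by
  have hsplit : F = F * vecMulVec ψ (star ψ) + F * (1 - vecMulVec ψ (star ψ)) := by
    rw [← Matrix.mul_add]; simp
  have h2 : 0 ≤ ((F * (1 - vecMulVec ψ (star ψ))).trace).re :=
    trace_mul_re_nonneg hF (Q_psd ψ hψ)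
  have := congrArg (fun M : Matrix n n ℂ => (M.trace).re) hsplit
  simp only [Matrix.trace_add, Complex.add_re] at this
  rw [trace_mul_P] at this
  linarith

end Stmt11Aux
/-- for the uniform state, E = I − |ψ⟩⟨ψ| is optimal, with maximal
reliability 1 − p/d. -/
theorem stmt_11 (d : ℕ) (hd : 0 < d) (ψ : Fin d → ℂ)
    (hψdef : ψ = fun _ => (1 / Real.sqrt d : ℂ))
    (p : ℝ) (hp0 : 0 < p) (hp1 : p < d / (d + 1))
    (E₀ : Matrix (Fin d) (Fin d) ℂ) (hE₀ : E₀ = 1 - vecMulVec ψ (star ψ)) :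
    E₀.PosSemidef ∧ (1 - E₀).PosSemidef ∧
    (∀ E : Matrix (Fin d) (Fin d) ℂ, E.PosSemidef → (1 - E).PosSemidef →
      ((p : ℂ) * (star ψ ⬝ᵥ (Matrix.diagonal (fun k => E k k) *ᵥ ψ)) +
        ((1 : ℂ) - (p : ℂ)) * (star ψ ⬝ᵥ ((1 - E) *ᵥ ψ))).re ≤
      ((p : ℂ) * (star ψ ⬝ᵥ (Matrix.diagonal (fun k => E₀ k k) *ᵥ ψ)) +
        ((1 : ℂ) - (p : ℂ)) * (star ψ ⬝ᵥ ((1 - E₀) *ᵥ ψ))).re) ∧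
    ((p : ℂ) * (star ψ ⬝ᵥ (Matrix.diagonal (fun k => E₀ k k) *ᵥ ψ)) +
      ((1 : ℂ) - (p : ℂ)) * (star ψ ⬝ᵥ ((1 - E₀) *ᵥ ψ))).re = 1 - p / d := by
  have hd' : (0:ℝ) < d := Nat.cast_pos.mpr hd
  have hdC : (d:ℂ) ≠ 0 := Nat.cast_ne_zero.mpr hd.ne'
  have hψk : ∀ k, ψ k = (1 / Real.sqrt d : ℂ) := fun k => by rw [hψdef]
  have hstar : star ψ = ψ := by
    funext k
    simp [hψk k, Complex.star_def, map_div₀, Complex.conj_ofReal]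
  have hψψ : ∀ k l : Fin d, ψ k * ψ l = 1 / (d:ℂ) := by
    intro k l
    rw [hψk k, hψk l, div_mul_div_comm, one_mul, ← Complex.ofReal_mul,
      Real.mul_self_sqrt (Nat.cast_nonneg d), Complex.ofReal_natCast]
  have hnorm : star ψ ⬝ᵥ ψ = 1 := by
    rw [hstar]
    simp only [dotProduct, hψψ, Finset.sum_const, Finset.card_univ, Fintype.card_fin,
      nsmul_eq_mul]
    rw [mul_one_div, div_self hdC]
  -- diagonal term is trace/d
  have hT : ∀ E : Matrix (Fin d) (Fin d) ℂ,
      star ψ ⬝ᵥ (Matrix.diagonal (fun k => E k k) *ᵥ ψ) = (1/(d:ℂ)) * E.trace := by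
    intro E
    rw [hstar]
    simp only [dotProduct, mulVec, Matrix.trace, Matrix.diag, Finset.mul_sum,
      Matrix.diagonal_apply]
    refine Finset.sum_congr rfl fun k _ => ?_
    rw [Finset.sum_eq_single k (fun j _ hj => by simp [Ne.symm hj]) (by simp)]
    simp only [if_true]
    rw [show ψ k * (E k k * ψ k) = (ψ k * ψ k) * E k k from by ring, hψψ, one_div]
  have hPψ : vecMulVec ψ (star ψ) *ᵥ ψ = ψ := by
    funext i
    simp only [mulVec, dotProduct, vecMulVec_apply]
    rw [show ∑ j, ψ i * star ψ j * ψ j = ψ i * ∑ j, star ψ j * ψ j from by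
      rw [Finset.mul_sum]; exact Finset.sum_congr rfl fun j _ => by ring]
    rw [show (∑ j, star ψ j * ψ j) = star ψ ⬝ᵥ ψ from rfl, hnorm, mul_one]
  -- value at E₀
  have htrE₀ : E₀.trace = (d:ℂ) - 1 := by
    rw [hE₀, Matrix.trace_sub, Matrix.trace_one]
    have : (vecMulVec ψ (star ψ)).trace = 1 := by
      rw [← Matrix.one_mul (vecMulVec ψ (star ψ)), Stmt11Aux.trace_mul_P,
        Matrix.one_mulVec, hnorm]
    rw [this]
    simp
  have h1E₀ : (1 : Matrix (Fin d) (Fin d) ℂ) - E₀ = vecMulVec ψ (star ψ) := by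
    rw [hE₀, sub_sub_cancel]
  have hval : ((p : ℂ) * (star ψ ⬝ᵥ (Matrix.diagonal (fun k => E₀ k k) *ᵥ ψ)) +
      ((1 : ℂ) - (p : ℂ)) * (star ψ ⬝ᵥ ((1 - E₀) *ᵥ ψ))).re = 1 - p / d := by
    rw [hT E₀, htrE₀, h1E₀, hPψ, hnorm]
    have : (p : ℂ) * ((1/(d:ℂ)) * ((d:ℂ) - 1)) + ((1:ℂ) - (p:ℂ)) * 1
        = ((1 - p / d : ℝ) : ℂ) := by
      push_cast
      field_simp
      ring
    rw [this, Complex.ofReal_re]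
  refine ⟨?_, ?_, ?_, hval⟩
  · rw [hE₀]; exact Stmt11Aux.Q_psd ψ hnorm
  · rw [h1E₀]; exact Stmt11Aux.P_psd ψ
  · intro E hE hE1
    rw [hval, hT E]
    set t : ℝ := (E.trace).re with ht
    set U : ℂ := star ψ ⬝ᵥ ((1 - E) *ᵥ ψ) with hU
    have hTre : ((p : ℂ) * ((1/(d:ℂ)) * E.trace)).re = p * (t / d) := by
      have : (p : ℂ) * ((1/(d:ℂ)) * E.trace) = ((p / d : ℝ) : ℂ) * E.trace := by
        push_cast; ring
      rw [this, Complex.re_ofReal_mul]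
      ring
    have hU1 : U.re ≤ 1 := by
      have h0 : 0 ≤ (star ψ ⬝ᵥ (E *ᵥ ψ)).re := by
        simpa using hE.re_dotProduct_nonneg ψ
      have : U = 1 - star ψ ⬝ᵥ (E *ᵥ ψ) := by
        rw [hU, Matrix.sub_mulVec, Matrix.one_mulVec, dotProduct_sub, hnorm]
      rw [this, Complex.sub_re, Complex.one_re]
      linarith
    have hU2 : U.re ≤ (d:ℝ) - t := by
      have h := Stmt11Aux.dot_le_trace ψ hE1 hnorm
      rw [← hU] at h
      rwa [Matrix.trace_sub, Matrix.trace_one, Complex.sub_re, ← ht,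
        show ((Fintype.card (Fin d) : ℂ)).re = (d:ℝ) by simp] at h
    have hre : ((p : ℂ) * ((1/(d:ℂ)) * E.trace) + ((1:ℂ) - (p:ℂ)) * U).re
        = p * (t / d) + (1 - p) * U.re := by
      rw [Complex.add_re, hTre]
      have : ((1:ℂ) - (p:ℂ)) * U = ((1 - p : ℝ) : ℂ) * U := by push_cast; ring
      rw [this, Complex.re_ofReal_mul]
    rw [hre]
    have hpd : p * ((d:ℝ) + 1) < d := (lt_div_iff₀ (by positivity)).mp hp1
    rw [← mul_le_mul_iff_left₀ hd']
    have e1 : (p * (t/d) + (1 - p) * U.re) * d = p * t + (1 - p) * (U.re * d) := by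
      field_simp
    have e2 : (1 - p/d) * d = d - p := by field_simp
    rw [e1, e2]
    nlinarith [mul_nonneg (by nlinarith : (0:ℝ) ≤ (d:ℝ) - p * d - p)
        (by linarith : (0:ℝ) ≤ 1 - U.re),
      mul_nonneg hp0.le (by linarith : (0:ℝ) ≤ (d:ℝ) - t - U.re)]
end

section
/- For d = 2, a unit vector ψ ∈ C² with both components nonzero, and 0 < p < 2/3, the maximal reliability equals ½ + ½√((1−2p)² + 4p(2−3p)|ψ₁|²|ψ₂|²); for 2/3 ≤ p < 1 it equals p. -/
open Matrix
open scoped ComplexOrder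

lemma aux_cs (α β D v n t : ℝ) (hD0 : 0 ≤ D) (hD2 : α^2 + β^2 ≤ D^2)
    (ht : 0 ≤ t) (hvn : v^2/4 + n^2 ≤ t^2/4) :
    α*v/2 + β*n ≤ D*t/2 := by
  nlinarith [sq_nonneg (α*n - β*v/2), mul_nonneg hD0 ht, sq_nonneg v, sq_nonneg n,
    sq_nonneg (α*v/2 + β*n), mul_nonneg (mul_nonneg hD0 hD0) (le_trans (by positivity) hvn)]

lemma aux_main1 (c α β D x y n : ℝ) (hD0 : 0 ≤ D) (hD2 : α^2 + β^2 ≤ D^2)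
    (hcD : c ≤ D) (hcD' : -c ≤ D)
    (hx0 : 0 ≤ x) (hx1 : x ≤ 1) (hy0 : 0 ≤ y) (hy1 : y ≤ 1)
    (h1 : n^2 ≤ x*y) (h2 : n^2 ≤ (1-x)*(1-y)) :
    c*(x+y)/2 + α*(x-y)/2 + β*n ≤ c/2 + D/2 := by
  rcases le_total (x+y) 1 with hu | hu
  · have hcs := aux_cs α β D (x-y) n (x+y) hD0 hD2 (by linarith) (by nlinarith)
    nlinarith
  · have hcs := aux_cs α β D (x-y) n (2-x-y) hD0 hD2 (by linarith) (by nlinarith)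
    nlinarith

lemma aux_main2 (c α β D x y n : ℝ) (hD0 : 0 ≤ D) (hD2 : α^2 + β^2 ≤ D^2)
    (hDc : D ≤ c)
    (hx0 : 0 ≤ x) (hx1 : x ≤ 1) (hy0 : 0 ≤ y) (hy1 : y ≤ 1)
    (h1 : n^2 ≤ x*y) (h2 : n^2 ≤ (1-x)*(1-y)) :
    c*(x+y)/2 + α*(x-y)/2 + β*n ≤ c := by
  have hcs := aux_cs α β D (x-y) n (2-x-y) hD0 hD2 (by linarith) (by nlinarith)
  nlinarith

lemma aux_ub1 (p a b s x y n : ℝ) (hp0 : 0 < p) (hp23 : p ≤ 2/3) (hab : a + b = 1)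
    (hs : s^2 = a*b) (hx0 : 0 ≤ x) (hx1 : x ≤ 1) (hy0 : 0 ≤ y) (hy1 : y ≤ 1)
    (h1 : n^2 ≤ x*y) (h2 : n^2 ≤ (1-x)*(1-y)) :
    (1-p) + (2*p-1)*(a*x+b*y) + 2*(1-p)*s*n
      ≤ 1/2 + Real.sqrt (((2*p-1)*(a-b))^2 + (2*(1-p)*s)^2)/2 := by
  set D := Real.sqrt (((2*p-1)*(a-b))^2 + (2*(1-p)*s)^2) with hD
  have hD0 : 0 ≤ D := Real.sqrt_nonneg _
  have hD2 : D^2 = ((2*p-1)*(a-b))^2 + (2*(1-p)*s)^2 := Real.sq_sqrt (by positivity)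
  have hab0 : 0 ≤ a*b := hs ▸ sq_nonneg s
  have hsq : D^2 - (2*p-1)^2 = 4*(a*b)*((1-p)^2 - (2*p-1)^2) := by
    rw [hD2]
    linear_combination (4*(1-p)^2) * hs + (2*p-1)^2 * (a+b+1) * hab
  have hpc : (2*p-1)^2 ≤ (1-p)^2 := by nlinarith
  have hDge : D^2 ≥ (2*p-1)^2 := by nlinarith [mul_nonneg hab0 (sub_nonneg.2 hpc)]
  have hcD : (2*p-1) ≤ D := by nlinarith
  have hcD' : -(2*p-1) ≤ D := by nlinarith
  have hlin : (2*p-1)*(a*x+b*y)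
      = (2*p-1)*(x+y)/2 + ((2*p-1)*(a-b))*(x-y)/2 := by
    linear_combination ((2*p-1)*(x+y)/2) * hab
  rw [hlin]
  have := aux_main1 (2*p-1) ((2*p-1)*(a-b)) (2*(1-p)*s) D x y n hD0 hD2.ge hcD hcD'
    hx0 hx1 hy0 hy1 h1 h2
  linarith

lemma aux_ub2 (p a b s x y n : ℝ) (hp23 : 2/3 ≤ p) (hp1 : p < 1) (hab : a + b = 1)
    (hs : s^2 = a*b) (hx0 : 0 ≤ x) (hx1 : x ≤ 1) (hy0 : 0 ≤ y) (hy1 : y ≤ 1)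
    (h1 : n^2 ≤ x*y) (h2 : n^2 ≤ (1-x)*(1-y)) :
    (1-p) + (2*p-1)*(a*x+b*y) + 2*(1-p)*s*n ≤ p := by
  set D := Real.sqrt (((2*p-1)*(a-b))^2 + (2*(1-p)*s)^2) with hD
  have hD0 : 0 ≤ D := Real.sqrt_nonneg _
  have hD2 : D^2 = ((2*p-1)*(a-b))^2 + (2*(1-p)*s)^2 := Real.sq_sqrt (by positivity)
  have hab0 : 0 ≤ a*b := hs ▸ sq_nonneg s
  have hsq : D^2 - (2*p-1)^2 = 4*(a*b)*((1-p)^2 - (2*p-1)^2) := by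
    rw [hD2]
    linear_combination (4*(1-p)^2) * hs + (2*p-1)^2 * (a+b+1) * hab
  have hpc : (1-p)^2 ≤ (2*p-1)^2 := by nlinarith
  have hDle : D^2 ≤ (2*p-1)^2 := by nlinarith [mul_nonneg hab0 (sub_nonneg.2 hpc)]
  have hc0 : 0 ≤ 2*p-1 := by linarith
  have hDc : D ≤ (2*p-1) := by nlinarith
  have hlin : (2*p-1)*(a*x+b*y)
      = (2*p-1)*(x+y)/2 + ((2*p-1)*(a-b))*(x-y)/2 := by
    linear_combination ((2*p-1)*(x+y)/2) * hab
  rw [hlin]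
  have := aux_main2 (2*p-1) ((2*p-1)*(a-b)) (2*(1-p)*s) D x y n hD0 hD2.ge hDc
    hx0 hx1 hy0 hy1 h1 h2
  linarith

lemma aux_herm_diag (E : Matrix (Fin 2) (Fin 2) ℂ) (hherm : E.IsHermitian)
    (i : Fin 2) : E i i = ((E i i).re : ℂ) := by
  have h : (starRingEnd ℂ) (E i i) = E i i := by
    conv_rhs => rw [← hherm]
    simp [Matrix.conjTranspose_apply]
  refine Complex.ext rfl ?_
  have := congrArg Complex.im h
  simp only [Complex.conj_im] at this
  simp only [Complex.ofReal_im]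
  linarith

lemma aux_psd (x y : ℝ) (z : ℂ) (hx : 0 ≤ x) (hy : 0 ≤ y)
    (hz : ‖z‖^2 ≤ x * y) :
    (!![(x:ℂ), z; (starRingEnd ℂ) z, (y:ℂ)]).PosSemidef := by
  refine Matrix.PosSemidef.of_dotProduct_mulVec_nonneg ?_ ?_
  · ext i j
    fin_cases i <;> fin_cases j <;>
      simp [Matrix.conjTranspose_apply, Complex.conj_ofReal]
  · intro v
    have hv : star v ⬝ᵥ (!![(x:ℂ), z; (starRingEnd ℂ) z, (y:ℂ)] *ᵥ v)
        = ((x * Complex.normSq (v 0) + y * Complex.normSq (v 1)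
          + 2 * (((starRingEnd ℂ) (v 0)) * z * v 1).re : ℝ) : ℂ) := by
      simp [Matrix.mulVec, dotProduct, Fin.sum_univ_two]
      apply Complex.ext <;>
        simp [Complex.add_re, Complex.mul_re, Complex.mul_im, Complex.add_im,
          Complex.normSq_apply] <;> ring
    rw [hv, Complex.zero_le_real]
    have hn0 : Complex.normSq (v 0) = ‖v 0‖^2 := (Complex.sq_norm _).symm
    have hn1 : Complex.normSq (v 1) = ‖v 1‖^2 := (Complex.sq_norm _).symm
    rw [hn0, hn1]
    have habs : ‖(starRingEnd ℂ) (v 0) * z * v 1‖ = ‖v 0‖*‖z‖*‖v 1‖ := by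
      simp [norm_mul, Complex.norm_conj]
    have ht : -(‖v 0‖*‖z‖*‖v 1‖) ≤ (((starRingEnd ℂ) (v 0)) * z * v 1).re := by
      have h2 := abs_le.1 (Complex.abs_re_le_norm ((starRingEnd ℂ) (v 0) * z * v 1))
      rw [habs] at h2; exact h2.1
    have key : 2*(‖v 0‖*‖z‖*‖v 1‖) ≤ x*‖v 0‖^2 + y*‖v 1‖^2 := by
      nlinarith [sq_nonneg (x*‖v 0‖^2 - y*‖v 1‖^2), sq_nonneg (‖v 0‖*‖v 1‖),
        mul_nonneg (mul_nonneg (norm_nonneg (v 0)) (norm_nonneg z)) (norm_nonneg (v 1)),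
        mul_nonneg (mul_nonneg hx (sq_nonneg ‖v 0‖)) hy,
        mul_nonneg hx (sq_nonneg ‖v 0‖), mul_nonneg hy (sq_nonneg ‖v 1‖)]
    linarith

lemma aux_value (ψ : Fin 2 → ℂ) (p : ℝ) (E : Matrix (Fin 2) (Fin 2) ℂ)
    (hherm : E.IsHermitian) :
    ((p : ℂ) * (star ψ ⬝ᵥ (Matrix.diagonal (fun k => E k k) *ᵥ ψ)) +
          ((1 : ℂ) - (p : ℂ)) * (star ψ ⬝ᵥ ((1 - E) *ᵥ ψ))).re
      = (1-p)*(‖ψ 0‖^2+‖ψ 1‖^2)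
        + (2*p-1)*((E 0 0).re*‖ψ 0‖^2 + (E 1 1).re*‖ψ 1‖^2)
        - 2*(1-p)*((starRingEnd ℂ) (ψ 0) * E 0 1 * ψ 1).re := by
  have h10 : E 1 0 = (starRingEnd ℂ) (E 0 1) := by
    conv_lhs => rw [← hherm]
    simp [Matrix.conjTranspose_apply]
  obtain ⟨x, hx⟩ : ∃ x : ℝ, E 0 0 = (x:ℂ) := ⟨_, aux_herm_diag E hherm 0⟩
  obtain ⟨y, hy⟩ : ∃ y : ℝ, E 1 1 = (y:ℂ) := ⟨_, aux_herm_diag E hherm 1⟩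
  rw [show ‖ψ 0‖^2 = Complex.normSq (ψ 0) by rw [Complex.sq_norm],
    show ‖ψ 1‖^2 = Complex.normSq (ψ 1) by rw [Complex.sq_norm]]
  simp only [Matrix.mulVec, dotProduct, Fin.sum_univ_two, Matrix.sub_apply,
    Matrix.one_apply, Matrix.diagonal, Pi.star_apply, Matrix.of_apply]
  simp only [h10, hx, hy, if_true, if_neg (by decide : (0 : Fin 2) ≠ 1),
    if_neg (by decide : (1 : Fin 2) ≠ 0), eq_self_iff_true]
  simp [Complex.add_re, Complex.mul_re, Complex.mul_im, Complex.add_im, Complex.sub_re,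
    Complex.sub_im, Complex.normSq_apply, Complex.conj_re, Complex.conj_im]
  ring

lemma aux_det (E : Matrix (Fin 2) (Fin 2) ℂ) (hE : E.PosSemidef)
    (h11 : (E 1 1).re ≤ 1) : ‖E 0 1‖^2 ≤ (E 0 0).re * (E 1 1).re := by
  have h10 : E 1 0 = (starRingEnd ℂ) (E 0 1) := by
    conv_lhs => rw [← hE.1]
    simp [Matrix.conjTranspose_apply]
  have him0 : (E 0 0).im = 0 := by
    have := congrArg Complex.im (aux_herm_diag E hE.1 0); simpa using this
  have him1 : (E 1 1).im = 0 := by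
    have := congrArg Complex.im (aux_herm_diag E hE.1 1); simpa using this
  have hx0 : 0 ≤ (E 0 0).re := by
    have := (Complex.le_def.1 (hE.dotProduct_mulVec_nonneg ![1, 0])).1
    simpa [Matrix.mulVec, dotProduct, Fin.sum_univ_two] using this
  have hy0 : 0 ≤ (E 1 1).re := by
    have := (Complex.le_def.1 (hE.dotProduct_mulVec_nonneg ![0, 1])).1
    simpa [Matrix.mulVec, dotProduct, Fin.sum_univ_two] using this
  have h1 : 0 ≤ (E 0 0).re * ((E 0 0).re * (E 1 1).re - Complex.normSq (E 0 1)) := by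
    have := (Complex.le_def.1 (hE.dotProduct_mulVec_nonneg ![E 0 1, -(((E 0 0).re : ℝ) : ℂ)])).1
    simp only [Matrix.mulVec, dotProduct, Fin.sum_univ_two, h10,
      Matrix.cons_val_zero, Matrix.cons_val_one, Matrix.head_cons, Pi.star_apply,
      RCLike.star_def] at this
    simp only [Complex.zero_re, Complex.add_re, Complex.mul_re, Complex.mul_im,
      Complex.add_im, Complex.conj_re, Complex.conj_im, Complex.ofReal_re,
      Complex.ofReal_im, Complex.neg_re, Complex.neg_im, him0, him1] at this
    simp only [Complex.normSq_apply]
    nlinarith [this]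
  have h2 : (2 - (E 1 1).re) * Complex.normSq (E 0 1) ≤ (E 0 0).re := by
    have := (Complex.le_def.1 (hE.dotProduct_mulVec_nonneg ![1, -((starRingEnd ℂ) (E 0 1))])).1
    simp only [Matrix.mulVec, dotProduct, Fin.sum_univ_two, h10,
      Matrix.cons_val_zero, Matrix.cons_val_one, Matrix.head_cons, Pi.star_apply,
      RCLike.star_def] at this
    simp only [Complex.zero_re, Complex.add_re, Complex.mul_re, Complex.mul_im,
      Complex.add_im, Complex.conj_re, Complex.conj_im, Complex.one_re, Complex.one_im,
      Complex.neg_re, Complex.neg_im, him0, him1] at this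
    simp only [Complex.normSq_apply]
    nlinarith [this]
  have hnz : ‖E 0 1‖^2 = Complex.normSq (E 0 1) := by
    rw [Complex.sq_norm]
  rw [hnz]
  have hN0 : 0 ≤ Complex.normSq (E 0 1) := Complex.normSq_nonneg _
  rcases hx0.eq_or_lt with hxe | hxp
  · nlinarith
  · nlinarith

lemma aux_diag_nonneg (E : Matrix (Fin 2) (Fin 2) ℂ) (hE : E.PosSemidef) (i : Fin 2) :
    0 ≤ (E i i).re := by
  fin_cases i
  · have := (Complex.le_def.1 (hE.dotProduct_mulVec_nonneg ![1, 0])).1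
    simpa [Matrix.mulVec, dotProduct, Fin.sum_univ_two] using this
  · have := (Complex.le_def.1 (hE.dotProduct_mulVec_nonneg ![0, 1])).1
    simpa [Matrix.mulVec, dotProduct, Fin.sum_univ_two] using this

lemma aux_sub_entries (E : Matrix (Fin 2) (Fin 2) ℂ) :
    ((1-E) 0 0).re = 1 - (E 0 0).re ∧ ((1-E) 1 1).re = 1 - (E 1 1).re ∧
      (1-E) 0 1 = -(E 0 1) := by
  refine ⟨?_, ?_, ?_⟩ <;> simp [Matrix.sub_apply, Matrix.one_apply]

lemma aux_re_lb (w0 w1 z : ℂ) :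
    -(‖w0‖*‖z‖*‖w1‖) ≤ (((starRingEnd ℂ) w0) * z * w1).re := by
  have habs : ‖(starRingEnd ℂ) w0 * z * w1‖ = ‖w0‖*‖z‖*‖w1‖ := by
    simp [norm_mul, Complex.norm_conj]
  have h2 := abs_le.1 (Complex.abs_re_le_norm ((starRingEnd ℂ) w0 * z * w1))
  rw [habs] at h2; exact h2.1

lemma aux_w (z w : ℂ) (k : ℝ) :
    ((starRingEnd ℂ) z * (-(k:ℂ) * (z * (starRingEnd ℂ) w)) * w).re
      = -k * (Complex.normSq z * Complex.normSq w) := by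
  have h : (starRingEnd ℂ) z * (-(k:ℂ) * (z * (starRingEnd ℂ) w)) * w
      = -(k:ℂ) * ((z * (starRingEnd ℂ) z) * (w * (starRingEnd ℂ) w)) := by ring
  rw [h, Complex.mul_conj, Complex.mul_conj]
  simp [Complex.mul_re]

set_option maxHeartbeats 1000000 in
/-- maximal reliability in dimension d = 2. -/
theorem stmt_12 (ψ : Fin 2 → ℂ)
    (hψ : ∑ k, ‖ψ k‖ ^ 2 = 1) (hψk : ∀ k, ψ k ≠ 0)
    (p : ℝ) (hp0 : 0 < p) (hp1 : p < 1) :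
    (p < 2 / 3 →
      sSup {r : ℝ | ∃ E : Matrix (Fin 2) (Fin 2) ℂ, E.PosSemidef ∧ (1 - E).PosSemidef ∧
        r = ((p : ℂ) * (star ψ ⬝ᵥ (Matrix.diagonal (fun k => E k k) *ᵥ ψ)) +
          ((1 : ℂ) - (p : ℂ)) * (star ψ ⬝ᵥ ((1 - E) *ᵥ ψ))).re} =
      1 / 2 + 1 / 2 * Real.sqrt ((1 - 2 * p) ^ 2 +
        4 * p * (2 - 3 * p) * ‖ψ 0‖ ^ 2 * ‖ψ 1‖ ^ 2)) ∧
    (2 / 3 ≤ p →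
      sSup {r : ℝ | ∃ E : Matrix (Fin 2) (Fin 2) ℂ, E.PosSemidef ∧ (1 - E).PosSemidef ∧
        r = ((p : ℂ) * (star ψ ⬝ᵥ (Matrix.diagonal (fun k => E k k) *ᵥ ψ)) +
          ((1 : ℂ) - (p : ℂ)) * (star ψ ⬝ᵥ ((1 - E) *ᵥ ψ))).re} = p) := by
  have hab : ‖ψ 0‖^2 + ‖ψ 1‖^2 = 1 := by rw [Fin.sum_univ_two] at hψ; exact hψ
  have hA : 0 < ‖ψ 0‖ := norm_pos_iff.2 (hψk 0)
  have hB : 0 < ‖ψ 1‖ := norm_pos_iff.2 (hψk 1)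
  have hn0 : Complex.normSq (ψ 0) = ‖ψ 0‖^2 := by
    rw [Complex.sq_norm]
  have hn1 : Complex.normSq (ψ 1) = ‖ψ 1‖^2 := by
    rw [Complex.sq_norm]
  -- common upper-bound machinery
  have hfacts : ∀ E : Matrix (Fin 2) (Fin 2) ℂ, E.PosSemidef → (1-E).PosSemidef →
      0 ≤ (E 0 0).re ∧ (E 0 0).re ≤ 1 ∧ 0 ≤ (E 1 1).re ∧ (E 1 1).re ≤ 1 ∧
      ‖E 0 1‖^2 ≤ (E 0 0).re * (E 1 1).re ∧
      ‖E 0 1‖^2 ≤ (1-(E 0 0).re) * (1-(E 1 1).re) := by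
    intro E hE hE'
    obtain ⟨hs1, hs2, hs3⟩ := aux_sub_entries E
    have hx0 := aux_diag_nonneg E hE 0
    have hy0 := aux_diag_nonneg E hE 1
    have hx1 : (E 0 0).re ≤ 1 := by
      have := aux_diag_nonneg (1-E) hE' 0; rw [hs1] at this; linarith
    have hy1 : (E 1 1).re ≤ 1 := by
      have := aux_diag_nonneg (1-E) hE' 1; rw [hs2] at this; linarith
    have h1 := aux_det E hE hy1
    have h2 : ‖E 0 1‖^2 ≤ (1-(E 0 0).re) * (1-(E 1 1).re) := by
      have := aux_det (1-E) hE' (by rw [hs2]; linarith)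
      rw [hs1, hs2, hs3, norm_neg] at this
      exact this
    exact ⟨hx0, hx1, hy0, hy1, h1, h2⟩
  constructor
  · -- case p < 2/3
    intro hp23
    set D := Real.sqrt (((2*p-1)*(‖ψ 0‖^2-‖ψ 1‖^2))^2 + (2*(1-p)*(‖ψ 0‖*‖ψ 1‖))^2)
      with hD
    have hβpos : 0 < 2*(1-p)*(‖ψ 0‖*‖ψ 1‖) := mul_pos (by linarith) (mul_pos hA hB)
    have hD2 : D^2 = ((2*p-1)*(‖ψ 0‖^2-‖ψ 1‖^2))^2 + (2*(1-p)*(‖ψ 0‖*‖ψ 1‖))^2 := by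
      rw [hD]; exact Real.sq_sqrt (by positivity)
    have hDpos : 0 < D := Real.sqrt_pos.2 (by
      nlinarith [pow_pos hβpos 2, sq_nonneg ((2*p-1)*(‖ψ 0‖^2-‖ψ 1‖^2))])
    have hDne : D ≠ 0 := ne_of_gt hDpos
    have hGarg : (1 - 2 * p) ^ 2 + 4 * p * (2 - 3 * p) * ‖ψ 0‖ ^ 2 * ‖ψ 1‖ ^ 2
        = ((2*p-1)*(‖ψ 0‖^2-‖ψ 1‖^2))^2 + (2*(1-p)*(‖ψ 0‖*‖ψ 1‖))^2 := by
      linear_combination (-(2*p-1)^2*(‖ψ 0‖^2+‖ψ 1‖^2+1))*hab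
    have hGD : Real.sqrt ((1 - 2 * p) ^ 2 +
        4 * p * (2 - 3 * p) * ‖ψ 0‖ ^ 2 * ‖ψ 1‖ ^ 2) = D := by
      rw [hD, hGarg]
    apply IsGreatest.csSup_eq
    constructor
    · -- membership: optimal E
      have hαle : ((2*p-1)*(‖ψ 0‖^2-‖ψ 1‖^2))^2 ≤ D^2 := by
        nlinarith [pow_pos hβpos 2]
      have hα1 : -D ≤ (2*p-1)*(‖ψ 0‖^2-‖ψ 1‖^2) := by nlinarith
      have hα2 : (2*p-1)*(‖ψ 0‖^2-‖ψ 1‖^2) ≤ D := by nlinarith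
      have hk0 : (0:ℝ) ≤ (1-p)/D := div_nonneg (by linarith) (by linarith)
      have hx0' : (0:ℝ) ≤ 1/2 + ((2*p-1)*(‖ψ 0‖^2-‖ψ 1‖^2))/(2*D) := by
        have key : (0:ℝ) ≤ (D + (2*p-1)*(‖ψ 0‖^2-‖ψ 1‖^2))/(2*D) :=
          div_nonneg (by linarith) (by linarith)
        have heq : 1/2 + ((2*p-1)*(‖ψ 0‖^2-‖ψ 1‖^2))/(2*D)
            = (D + (2*p-1)*(‖ψ 0‖^2-‖ψ 1‖^2))/(2*D) := by field_simp
        rw [heq]; exact key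
      have hy0' : (0:ℝ) ≤ 1/2 - ((2*p-1)*(‖ψ 0‖^2-‖ψ 1‖^2))/(2*D) := by
        have key : (0:ℝ) ≤ (D - (2*p-1)*(‖ψ 0‖^2-‖ψ 1‖^2))/(2*D) :=
          div_nonneg (by linarith) (by linarith)
        have heq : 1/2 - ((2*p-1)*(‖ψ 0‖^2-‖ψ 1‖^2))/(2*D)
            = (D - (2*p-1)*(‖ψ 0‖^2-‖ψ 1‖^2))/(2*D) := by field_simp
        rw [heq]; exact key
      have hznorm : ‖-((((1-p)/D : ℝ)):ℂ) * (ψ 0 * (starRingEnd ℂ) (ψ 1))‖^2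
          = ((1-p)/D)^2 * (‖ψ 0‖^2*‖ψ 1‖^2) := by
        rw [norm_mul, norm_neg, Complex.norm_real, norm_mul, RCLike.norm_conj,
          Real.norm_eq_abs, abs_of_nonneg hk0]
        ring
      have hzxy : ‖-((((1-p)/D : ℝ)):ℂ) * (ψ 0 * (starRingEnd ℂ) (ψ 1))‖^2
          = (1/2 + ((2*p-1)*(‖ψ 0‖^2-‖ψ 1‖^2))/(2*D))
            * (1/2 - ((2*p-1)*(‖ψ 0‖^2-‖ψ 1‖^2))/(2*D)) := by
        rw [hznorm]
        apply mul_right_cancel₀ (show (4*D^2 : ℝ) ≠ 0 by positivity)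
        have hmid : 4*(1-p)^2*(‖ψ 0‖^2*‖ψ 1‖^2)
            = D^2 - ((2*p-1)*(‖ψ 0‖^2-‖ψ 1‖^2))^2 := by rw [hD2]; ring
        calc ((1-p)/D)^2 * (‖ψ 0‖^2*‖ψ 1‖^2) * (4*D^2)
            = 4*(1-p)^2*(‖ψ 0‖^2*‖ψ 1‖^2) := by field_simp
          _ = D^2 - ((2*p-1)*(‖ψ 0‖^2-‖ψ 1‖^2))^2 := hmid
          _ = (1/2 + ((2*p-1)*(‖ψ 0‖^2-‖ψ 1‖^2))/(2*D))
            * (1/2 - ((2*p-1)*(‖ψ 0‖^2-‖ψ 1‖^2))/(2*D)) * (4*D^2) := by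
              field_simp; ring
      have hpsd1 := aux_psd (1/2 + ((2*p-1)*(‖ψ 0‖^2-‖ψ 1‖^2))/(2*D))
        (1/2 - ((2*p-1)*(‖ψ 0‖^2-‖ψ 1‖^2))/(2*D))
        (-((((1-p)/D : ℝ)):ℂ) * (ψ 0 * (starRingEnd ℂ) (ψ 1))) hx0' hy0' hzxy.le
      have hsubE : (1 : Matrix (Fin 2) (Fin 2) ℂ)
            - !![((1/2 + ((2*p-1)*(‖ψ 0‖^2-‖ψ 1‖^2))/(2*D) : ℝ):ℂ),
          -((((1-p)/D : ℝ)):ℂ) * (ψ 0 * (starRingEnd ℂ) (ψ 1));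
          (starRingEnd ℂ) (-((((1-p)/D : ℝ)):ℂ) * (ψ 0 * (starRingEnd ℂ) (ψ 1))),
          ((1/2 - ((2*p-1)*(‖ψ 0‖^2-‖ψ 1‖^2))/(2*D) : ℝ):ℂ)]
          = !![((1/2 - ((2*p-1)*(‖ψ 0‖^2-‖ψ 1‖^2))/(2*D) : ℝ):ℂ),
          -(-((((1-p)/D : ℝ)):ℂ) * (ψ 0 * (starRingEnd ℂ) (ψ 1)));
          (starRingEnd ℂ) (-(-((((1-p)/D : ℝ)):ℂ) * (ψ 0 * (starRingEnd ℂ) (ψ 1)))),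
          ((1/2 + ((2*p-1)*(‖ψ 0‖^2-‖ψ 1‖^2))/(2*D) : ℝ):ℂ)] := by
        ext i j
        fin_cases i <;> fin_cases j <;>
          simp [Matrix.one_apply, Matrix.sub_apply, map_neg] <;> push_cast <;> ring
      have hpsd2 : ((1 : Matrix (Fin 2) (Fin 2) ℂ)
            - !![((1/2 + ((2*p-1)*(‖ψ 0‖^2-‖ψ 1‖^2))/(2*D) : ℝ):ℂ),
          -((((1-p)/D : ℝ)):ℂ) * (ψ 0 * (starRingEnd ℂ) (ψ 1));
          (starRingEnd ℂ) (-((((1-p)/D : ℝ)):ℂ) * (ψ 0 * (starRingEnd ℂ) (ψ 1))),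
          ((1/2 - ((2*p-1)*(‖ψ 0‖^2-‖ψ 1‖^2))/(2*D) : ℝ):ℂ)]).PosSemidef := by
        rw [hsubE]
        refine aux_psd _ _ _ hy0' hx0' ?_
        rw [norm_neg, hzxy]
        exact le_of_eq (by ring)
      refine ⟨_, hpsd1, hpsd2, ?_⟩
      rw [hGD, aux_value _ _ _ hpsd1.1]
      have e00 : ((!![((1/2 + ((2*p-1)*(‖ψ 0‖^2-‖ψ 1‖^2))/(2*D) : ℝ):ℂ),
          -((((1-p)/D : ℝ)):ℂ) * (ψ 0 * (starRingEnd ℂ) (ψ 1));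
          (starRingEnd ℂ) (-((((1-p)/D : ℝ)):ℂ) * (ψ 0 * (starRingEnd ℂ) (ψ 1))),
          ((1/2 - ((2*p-1)*(‖ψ 0‖^2-‖ψ 1‖^2))/(2*D) : ℝ):ℂ)]) 0 0).re
          = 1/2 + ((2*p-1)*(‖ψ 0‖^2-‖ψ 1‖^2))/(2*D) := by
        simp only [Matrix.cons_val', Matrix.cons_val_zero, Matrix.empty_val',
          Matrix.cons_val_fin_one, Matrix.cons_val_one, Matrix.head_cons,
          Matrix.head_fin_const, Matrix.of_apply, Complex.ofReal_re]
      have e11 : ((!![((1/2 + ((2*p-1)*(‖ψ 0‖^2-‖ψ 1‖^2))/(2*D) : ℝ):ℂ),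
          -((((1-p)/D : ℝ)):ℂ) * (ψ 0 * (starRingEnd ℂ) (ψ 1));
          (starRingEnd ℂ) (-((((1-p)/D : ℝ)):ℂ) * (ψ 0 * (starRingEnd ℂ) (ψ 1))),
          ((1/2 - ((2*p-1)*(‖ψ 0‖^2-‖ψ 1‖^2))/(2*D) : ℝ):ℂ)]) 1 1).re
          = 1/2 - ((2*p-1)*(‖ψ 0‖^2-‖ψ 1‖^2))/(2*D) := by
        simp only [Matrix.cons_val', Matrix.cons_val_zero, Matrix.empty_val',
          Matrix.cons_val_fin_one, Matrix.cons_val_one, Matrix.head_cons,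
          Matrix.head_fin_const, Matrix.of_apply, Complex.ofReal_re]
      have e01 : (!![((1/2 + ((2*p-1)*(‖ψ 0‖^2-‖ψ 1‖^2))/(2*D) : ℝ):ℂ),
          -((((1-p)/D : ℝ)):ℂ) * (ψ 0 * (starRingEnd ℂ) (ψ 1));
          (starRingEnd ℂ) (-((((1-p)/D : ℝ)):ℂ) * (ψ 0 * (starRingEnd ℂ) (ψ 1))),
          ((1/2 - ((2*p-1)*(‖ψ 0‖^2-‖ψ 1‖^2))/(2*D) : ℝ):ℂ)]) 0 1
          = -((((1-p)/D : ℝ)):ℂ) * (ψ 0 * (starRingEnd ℂ) (ψ 1)) := by simp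
      rw [e00, e11, e01, hab]
      have hw := aux_w (ψ 0) (ψ 1) ((1-p)/D)
      rw [hn0, hn1] at hw
      rw [hw]
      field_simp
      linear_combination hD2 - (2*p-1)*D * hab
    · -- upper bound
      rintro r ⟨E, hE, hE', rfl⟩
      obtain ⟨hx0, hx1, hy0, hy1, h1, h2⟩ := hfacts E hE hE'
      rw [aux_value ψ p E hE.1, hab]
      rw [show (1 - 2 * p) ^ 2 + 4 * p * (2 - 3 * p) * ‖ψ 0‖ ^ 2 * ‖ψ 1‖ ^ 2
        = ((2*p-1)*(‖ψ 0‖^2-‖ψ 1‖^2))^2 + (2*(1-p)*(‖ψ 0‖*‖ψ 1‖))^2 from hGarg]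
      have hub := aux_ub1 p (‖ψ 0‖^2) (‖ψ 1‖^2) (‖ψ 0‖*‖ψ 1‖) ((E 0 0).re) ((E 1 1).re)
        (‖E 0 1‖) hp0 (le_of_lt hp23) hab (by ring) hx0 hx1 hy0 hy1 h1 h2
      have hre := aux_re_lb (ψ 0) (ψ 1) (E 0 1)
      rw [← hD] at hub
      have hkey : -(2*(1-p))*((starRingEnd ℂ) (ψ 0) * E 0 1 * ψ 1).re
          ≤ 2*(1-p)*(‖ψ 0‖*‖ψ 1‖)*‖E 0 1‖ := by
        have hh := mul_nonneg (show (0:ℝ) ≤ 2*(1-p) by linarith)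
          (show 0 ≤ ((starRingEnd ℂ) (ψ 0) * E 0 1 * ψ 1).re + ‖ψ 0‖*‖E 0 1‖*‖ψ 1‖ by
            linarith)
        linarith [hh]
      linarith [hub, hkey]
  · -- case 2/3 ≤ p
    intro hp23
    apply IsGreatest.csSup_eq
    constructor
    · refine ⟨1, Matrix.PosSemidef.one, by rw [sub_self]; exact Matrix.PosSemidef.zero, ?_⟩
      rw [aux_value ψ p 1 Matrix.isHermitian_one]
      have e00 : ((1 : Matrix (Fin 2) (Fin 2) ℂ) 0 0).re = 1 := by simp
      have e11 : ((1 : Matrix (Fin 2) (Fin 2) ℂ) 1 1).re = 1 := by simp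
      have e01 : (1 : Matrix (Fin 2) (Fin 2) ℂ) 0 1 = 0 := by
        simp [Matrix.one_apply]
      rw [e00, e11, e01]
      simp only [mul_zero, zero_mul, Complex.zero_re, one_mul]
      linear_combination (-p) * hab
    · rintro r ⟨E, hE, hE', rfl⟩
      obtain ⟨hx0, hx1, hy0, hy1, h1, h2⟩ := hfacts E hE hE'
      rw [aux_value ψ p E hE.1, hab]
      have hub := aux_ub2 p (‖ψ 0‖^2) (‖ψ 1‖^2) (‖ψ 0‖*‖ψ 1‖) ((E 0 0).re) ((E 1 1).re)
        (‖E 0 1‖) hp23 hp1 hab (by ring) hx0 hx1 hy0 hy1 h1 h2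
      have hre := aux_re_lb (ψ 0) (ψ 1) (E 0 1)
      have hkey : -(2*(1-p))*((starRingEnd ℂ) (ψ 0) * E 0 1 * ψ 1).re
          ≤ 2*(1-p)*(‖ψ 0‖*‖ψ 1‖)*‖E 0 1‖ := by
        have hh := mul_nonneg (show (0:ℝ) ≤ 2*(1-p) by linarith)
          (show 0 ≤ ((starRingEnd ℂ) (ψ 0) * E 0 1 * ψ 1).re + ‖ψ 0‖*‖E 0 1‖*‖ψ 1‖ by
            linarith)
        linarith [hh]
      linarith [hub, hkey]
end

section
/- Let ψ ∈ C^d be a unit vector and δ = max_k |ψ_k|². Then for every z > 0, f_ψ(z) = ∑_k |ψ_k|²/(z+|ψ_k|²) ≤ δ/(z+δ) + (1−δ)/(z + (1−δ)/(d−1)). -/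
/-- Tangent line bound for the concave function `x ↦ x/(z+x)`. -/
lemma tangent_bound (z x m : ℝ) (hz : 0 < z) (hx : 0 ≤ x) (hm : 0 ≤ m) :
    x / (z + x) ≤ m / (z + m) + z * (x - m) / (z + m) ^ 2 := by
  have h1 : 0 < z + x := by linarith
  have h2 : 0 < z + m := by linarith
  rw [div_add_div _ _ (ne_of_gt h2) (by positivity), div_le_div_iff₀ h1 (by positivity)]
  nlinarith [mul_nonneg hz.le (sq_nonneg (x - m)), sq_nonneg (x - m)]

/-- a δ-dependent upper bound on f_ψ. -/
theorem stmt_13 (d : ℕ) (hd : 2 ≤ d) (ψ : Fin d → ℂ)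
    (hψ : ∑ k, ‖ψ k‖ ^ 2 = 1)
    (δ : ℝ) (hδ : IsGreatest (Set.range fun k => ‖ψ k‖ ^ 2) δ)
    (z : ℝ) (hz : 0 < z) :
    ∑ k, ‖ψ k‖ ^ 2 / (z + ‖ψ k‖ ^ 2) ≤
      δ / (z + δ) + (1 - δ) / (z + (1 - δ) / ((d : ℝ) - 1)) := by
  obtain ⟨k0, hk0⟩ := hδ.1
  simp only at hk0
  have hnn : ∀ k, (0:ℝ) ≤ ‖ψ k‖ ^ 2 := fun k => by positivity
  have hδ0 : 0 ≤ δ := hk0 ▸ hnn k0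
  have hδ1 : δ ≤ 1 := by
    have := Finset.single_le_sum (f := fun k => ‖ψ k‖ ^ 2) (fun k _ => hnn k)
      (Finset.mem_univ k0)
    rw [hk0, hψ] at this; exact this
  have hd1 : (0:ℝ) < (d:ℝ) - 1 := by
    have : (2:ℝ) ≤ (d:ℝ) := by exact_mod_cast hd
    linarith
  set m : ℝ := (1 - δ) / ((d : ℝ) - 1) with hmdef
  have hm0 : 0 ≤ m := div_nonneg (by linarith) hd1.le
  have hzm : 0 < z + m := by linarith
  set E := Finset.univ.erase k0 with hE
  have hsplit : ∑ k, ‖ψ k‖ ^ 2 / (z + ‖ψ k‖ ^ 2)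
      = ‖ψ k0‖ ^ 2 / (z + ‖ψ k0‖ ^ 2) + ∑ k ∈ E, ‖ψ k‖ ^ 2 / (z + ‖ψ k‖ ^ 2) := by
    rw [hE, ← Finset.add_sum_erase _ _ (Finset.mem_univ k0)]
  have hrest : ∑ k ∈ E, ‖ψ k‖ ^ 2 = 1 - δ := by
    have := Finset.add_sum_erase Finset.univ (fun k => ‖ψ k‖ ^ 2) (Finset.mem_univ k0)
    rw [hk0, hψ] at this
    linarith [this]
  have hcard : ((E.card : ℝ)) = (d:ℝ) - 1 := by
    rw [hE, Finset.card_erase_of_mem (Finset.mem_univ k0), Finset.card_univ,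
      Fintype.card_fin, Nat.cast_sub (by omega)]
    simp
  have hsum0 : ∑ k ∈ E, (‖ψ k‖ ^ 2 - m) = 0 := by
    rw [Finset.sum_sub_distrib, hrest, Finset.sum_const, nsmul_eq_mul, hcard, hmdef]
    field_simp
    ring
  have hbound : ∑ k ∈ E, ‖ψ k‖ ^ 2 / (z + ‖ψ k‖ ^ 2) ≤ (1 - δ) / (z + m) := by
    calc ∑ k ∈ E, ‖ψ k‖ ^ 2 / (z + ‖ψ k‖ ^ 2)
        ≤ ∑ k ∈ E, (m / (z + m) + z / (z + m) ^ 2 * (‖ψ k‖ ^ 2 - m)) := by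
          apply Finset.sum_le_sum
          intro k _
          have := tangent_bound z (‖ψ k‖ ^ 2) m hz (hnn k) hm0
          calc ‖ψ k‖ ^ 2 / (z + ‖ψ k‖ ^ 2)
              ≤ m / (z + m) + z * (‖ψ k‖ ^ 2 - m) / (z + m) ^ 2 := this
            _ = m / (z + m) + z / (z + m) ^ 2 * (‖ψ k‖ ^ 2 - m) := by ring
      _ = E.card • (m / (z + m)) + z / (z + m) ^ 2 * ∑ k ∈ E, (‖ψ k‖ ^ 2 - m) := by
          rw [Finset.sum_add_distrib, Finset.sum_const, Finset.mul_sum]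
      _ = (1 - δ) / (z + m) := by
          rw [hsum0, mul_zero, add_zero, nsmul_eq_mul, hcard, hmdef]
          field_simp
  rw [hsplit, hk0]
  exact add_le_add_right hbound _
end

section
/- Let ρ be a density matrix on C^d of full rank with smallest eigenvalue p_d > 0, and let p ≤ p_d/(max_k ⟨b_k|ρ|b_k⟩ + p_d). Then the operator A = p·diag ρ − (1−p)ρ is negative semidefinite; consequently E = 0 is an optimal effect operator (blind guessing is optimal). Moreover p_d/(max_k ⟨b_k|ρ|b_k⟩ + p_d) ≤ 1/2. -/
open Matrix
open scoped ComplexOrder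

lemma psd_diag_re_nonneg {n : Type*} [Fintype n] [DecidableEq n]
    {M : Matrix n n ℂ} (hM : M.PosSemidef) (i : n) : 0 ≤ (M i i).re := by
  have h := hM.dotProduct_mulVec_nonneg (Pi.single i 1)
  have : star (Pi.single i 1 : n → ℂ) ⬝ᵥ M *ᵥ Pi.single i 1 = M i i := by
    simp [dotProduct, mulVec, Pi.single_apply, Finset.sum_ite_eq, Finset.sum_ite_eq']
  rw [this] at h
  exact (Complex.le_def.mp h).1

lemma psd_trace_re_nonneg {n : Type*} [Fintype n] [DecidableEq n]
    {M : Matrix n n ℂ} (hM : M.PosSemidef) : 0 ≤ M.trace.re := by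
  rw [Matrix.trace, Complex.re_sum]
  exact Finset.sum_nonneg fun i _ => psd_diag_re_nonneg hM i

lemma trace_mul_psd_re_nonneg {n : Type*} [Fintype n] [DecidableEq n]
    {X Y : Matrix n n ℂ} (hX : X.PosSemidef) (hY : Y.PosSemidef) :
    0 ≤ ((X * Y).trace).re := by
  obtain ⟨B, rfl⟩ : ∃ B : Matrix n n ℂ, Y = star B * B := by
    open scoped MatrixOrder Matrix.Norms.L2Operator in
    exact CStarAlgebra.nonneg_iff_eq_star_mul_self.mp hY.nonneg
  rw [← mul_assoc, Matrix.trace_mul_cycle]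
  exact psd_trace_re_nonneg (hX.mul_mul_conjTranspose_same B)

lemma smul_psd {n : Type*} [Fintype n] {M : Matrix n n ℂ} (hM : M.PosSemidef)
    {c : ℝ} (hc : 0 ≤ c) : ((c : ℂ) • M).PosSemidef := by
  refine Matrix.PosSemidef.of_dotProduct_mulVec_nonneg ?_ fun x => ?_
  · rw [Matrix.IsHermitian, conjTranspose_smul, hM.1.eq]
    simp
  · rw [smul_mulVec, dotProduct_smul, smul_eq_mul]
    exact mul_nonneg (by exact_mod_cast hc) (hM.dotProduct_mulVec_nonneg x)

lemma trace_mul_diagonal_comm {n : Type*} [Fintype n] [DecidableEq n]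
    (X Y : Matrix n n ℂ) :
    (X * Matrix.diagonal (fun k => Y k k)).trace
      = (Matrix.diagonal (fun k => X k k) * Y).trace := by
  simp [Matrix.trace, Matrix.diag, Matrix.mul_apply, Matrix.diagonal_apply,
    Finset.sum_ite_eq, Finset.sum_ite_eq']

/-- for full-rank ρ and small p, blind guessing (E = 0) is optimal. -/
theorem stmt_16 (d : ℕ) (hd : 0 < d) (ρ : Matrix (Fin d) (Fin d) ℂ)
    (hρ : ρ.PosDef) (hρt : ρ.trace = 1)
    (pd : ℝ) (hpd : IsLeast (Set.range hρ.1.eigenvalues) pd)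
    (m : ℝ) (hm : IsGreatest (Set.range fun k => (ρ k k).re) m)
    (p : ℝ) (hp0 : 0 < p) (hp1 : p < 1) (hp : p ≤ pd / (m + pd)) :
    (-((p : ℂ) • Matrix.diagonal (fun k => ρ k k) - ((1 : ℂ) - (p : ℂ)) • ρ)).PosSemidef ∧
    (∀ E : Matrix (Fin d) (Fin d) ℂ, E.PosSemidef → (1 - E).PosSemidef →
      ((ρ * ((p : ℂ) • Matrix.diagonal (fun k => E k k) + ((1 : ℂ) - (p : ℂ)) • (1 - E))).trace).re ≤
      ((ρ * ((1 : ℂ) - (p : ℂ)) • (1 : Matrix (Fin d) (Fin d) ℂ)).trace).re) ∧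
    pd / (m + pd) ≤ 1 / 2 := by
  obtain ⟨⟨i0, hi0⟩, hlb⟩ := hpd
  have hlam : ∀ i, pd ≤ hρ.1.eigenvalues i := fun i => hlb ⟨i, rfl⟩
  have hpd_pos : 0 < pd := hi0 ▸ hρ.eigenvalues_pos i0
  -- ρ - pd • 1 is PSD
  have hN1 : (ρ - (pd : ℂ) • 1).PosSemidef := by
    have hD : (Matrix.diagonal (fun i => ((hρ.1.eigenvalues i - pd : ℝ) : ℂ))).PosSemidef :=
      Matrix.PosSemidef.diagonal (by
        intro i
        simp only [Pi.zero_apply]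
        rw [Complex.zero_le_real]; linarith [hlam i])
    have h2 := hD.mul_mul_conjTranspose_same (hρ.1.eigenvectorUnitary : Matrix (Fin d) (Fin d) ℂ)
    have h3 : (hρ.1.eigenvectorUnitary : Matrix (Fin d) (Fin d) ℂ)
          * Matrix.diagonal (fun i => ((hρ.1.eigenvalues i - pd : ℝ) : ℂ))
          * (hρ.1.eigenvectorUnitary : Matrix (Fin d) (Fin d) ℂ)ᴴ
        = ρ - (pd : ℂ) • 1 := by
      have hsp := hρ.1.spectral_theorem
      rw [Unitary.conjStarAlgAut_apply, Matrix.star_eq_conjTranspose] at hsp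
      have hUU : (hρ.1.eigenvectorUnitary : Matrix (Fin d) (Fin d) ℂ)
          * (hρ.1.eigenvectorUnitary : Matrix (Fin d) (Fin d) ℂ)ᴴ = 1 := by
        rw [← Matrix.star_eq_conjTranspose]
        exact Unitary.mul_star_self_of_mem hρ.1.eigenvectorUnitary.2
      have hdg : Matrix.diagonal (fun i : Fin d => ((hρ.1.eigenvalues i - pd : ℝ) : ℂ))
          = Matrix.diagonal (RCLike.ofReal ∘ hρ.1.eigenvalues) - (pd : ℂ) • 1 := by
        rw [Matrix.smul_one_eq_diagonal]
        ext i j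
        by_cases h : i = j
        · subst h; simp [Matrix.diagonal_apply_eq, Function.comp]
        · simp [Matrix.diagonal_apply_ne _ h, Matrix.sub_apply]
      rw [hdg, Matrix.mul_sub, Matrix.sub_mul, Matrix.mul_smul, Matrix.smul_mul,
        Matrix.mul_one, hUU, ← hsp]
    rwa [h3] at h2
  -- every diagonal entry of ρ is real
  have him : ∀ k, (ρ k k).im = 0 := by
    intro k
    have h := congrFun (congrFun hρ.1.eq k) k
    rw [Matrix.conjTranspose_apply] at h
    have := congrArg Complex.im h
    simp at this; linarith
  -- pd ≤ m
  have hpdm : pd ≤ m := by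
    have h1 := psd_diag_re_nonneg hN1 ⟨0, hd⟩
    have h2 : ((ρ - (pd : ℂ) • 1) ⟨0, hd⟩ ⟨0, hd⟩).re = (ρ ⟨0, hd⟩ ⟨0, hd⟩).re - pd := by
      simp [Matrix.sub_apply, Matrix.one_apply_eq]
    have h3 := hm.2 ⟨(⟨0, hd⟩ : Fin d), rfl⟩
    rw [h2] at h1; linarith
  have hmpd : 0 < m + pd := by linarith
  have hple : p * (m + pd) ≤ pd := by
    rw [le_div_iff₀ hmpd] at hp; exact hp
  have hc : 0 ≤ (1 - p) * pd - p * m := by nlinarith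
  -- m • 1 - diag ρ is PSD
  have hN2 : ((m : ℂ) • 1 - Matrix.diagonal (fun k => ρ k k)).PosSemidef := by
    have hform : (m : ℂ) • (1 : Matrix (Fin d) (Fin d) ℂ) - Matrix.diagonal (fun k => ρ k k)
        = Matrix.diagonal (fun k => (m : ℂ) - ρ k k) := by
      rw [Matrix.smul_one_eq_diagonal]
      ext i j
      by_cases h : i = j
      · subst h; simp
      · simp [Matrix.diagonal_apply_ne _ h, Matrix.sub_apply]
    rw [hform]
    refine Matrix.PosSemidef.diagonal ?_
    intro k
    simp only [Pi.zero_apply]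
    rw [Complex.le_def]
    constructor
    · simpa using hm.2 ⟨k, rfl⟩
    · simp [him k]
  -- decomposition of -A
  have key1 : -((p : ℂ) • Matrix.diagonal (fun k => ρ k k) - ((1 : ℂ) - (p : ℂ)) • ρ)
      = ((1 - p : ℝ) : ℂ) • (ρ - (pd : ℂ) • 1)
        + ((p : ℝ) : ℂ) • ((m : ℂ) • 1 - Matrix.diagonal (fun k => ρ k k))
        + (((1 - p) * pd - p * m : ℝ) : ℂ) • (1 : Matrix (Fin d) (Fin d) ℂ) := by
    push_cast
    module
  have hN : (-((p : ℂ) • Matrix.diagonal (fun k => ρ k k)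
      - ((1 : ℂ) - (p : ℂ)) • ρ)).PosSemidef := by
    rw [key1]
    exact ((smul_psd hN1 (by linarith)).add (smul_psd hN2 hp0.le)).add
      (smul_psd Matrix.PosSemidef.one hc)
  refine ⟨hN, ?_, ?_⟩
  · intro E hE hE1
    have hteq : (ρ * ((p : ℂ) • Matrix.diagonal (fun k => E k k)
          + ((1 : ℂ) - (p : ℂ)) • (1 - E))).trace
        = (ρ * ((1 : ℂ) - (p : ℂ)) • (1 : Matrix (Fin d) (Fin d) ℂ)).trace
          + (((p : ℂ) • Matrix.diagonal (fun k => ρ k k) - ((1 : ℂ) - (p : ℂ)) • ρ) * E).trace := by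
      simp only [Matrix.mul_add, Matrix.mul_sub, Matrix.sub_mul, Matrix.add_mul,
        Matrix.mul_smul, Matrix.smul_mul, Matrix.mul_one, Matrix.one_mul,
        Matrix.trace_add, Matrix.trace_sub, Matrix.trace_smul]
      rw [trace_mul_diagonal_comm ρ E]
      simp [smul_sub]
      ring
    have hAE := trace_mul_psd_re_nonneg hN hE
    rw [Matrix.neg_mul, Matrix.trace_neg, Complex.neg_re] at hAE
    rw [hteq, Complex.add_re]
    linarith
  · rw [div_le_div_iff₀ hmpd (by norm_num : (0 : ℝ) < 2)]
    linarith
end
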